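/- arXiv:2209.00898 — 6 statements merged into one kernel-verified Lean document; each statement's English description precedes it below -/
import Mathlib

section
/- Let A be a locally coherent Grothendieck category in which every object of fp A (the finitely presented objects) has finite composition length. Then every injective object Q of A has finite endolength, i.e. Hom_A(W, Q) has finite length as an End_A(Q)-module for every finitely presented object W. -/
/-!
Statement 2: In a locally coherent Grothendieck category `A` in which every finitely
presented object has finite composition length (i.e. `A` is locally finite), every injective
object `Q` has finite endolength: `Hom_A(W, Q)` has finite length as an `End_A(Q)`-module
for every finitely presented `W`.
-/

open CategoryTheory CategoryTheory.Limits

universe v u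

variable {A : Type u} [Category.{v} A] [Abelian A]

/-- An object is finitely presented if corepresenting preserves filtered colimits. -/
def FinPres (X : A) : Prop :=
  ∀ (J : Type v) [SmallCategory J] [IsFiltered J],
    Nonempty (PreservesColimitsOfShape J (coyoneda.obj (Opposite.op X)))

/-- An object has finite composition length: its subobject lattice is well-founded in both
directions. -/
def FiniteLengthObj (X : A) : Prop :=
  WellFoundedGT (Subobject X) ∧ WellFoundedLT (Subobject X)

/-- A presentation of `X` as a filtered colimit of objects satisfying `P`. -/
structure FilteredPresentation (P : A → Prop) (X : A) where
  J : Type v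
  [cat : SmallCategory J]
  [filt : IsFiltered J]
  D : J ⥤ A
  fp : ∀ j : J, P (D.obj j)
  c : Cocone D
  isColim : IsColimit c
  iso : c.pt ≅ X

attribute [instance] FilteredPresentation.cat FilteredPresentation.filt

section Aux

variable {Q : A}

/-- The joint kernel of a list of morphisms `X ⟶ Q`, as an object with a map to `X`. -/
noncomputable def jk {X : A} : List (X ⟶ Q) → (K : A) × (K ⟶ X)
  | [] => ⟨X, 𝟙 X⟩
  | f :: L => ⟨kernel ((jk L).2 ≫ f), kernel.ι ((jk L).2 ≫ f) ≫ (jk L).2⟩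

lemma jk_mono {X : A} (L : List (X ⟶ Q)) : Mono (jk L).2 := by
  induction L with
  | nil => dsimp [jk]; infer_instance
  | cons f L ih => dsimp [jk]; haveI := ih; infer_instance

lemma jk_vanish {X : A} (L : List (X ⟶ Q)) : ∀ f ∈ L, (jk L).2 ≫ f = 0 := by
  induction L with
  | nil => simp
  | cons f L ih =>
    intro f' hf'
    rcases List.mem_cons.mp hf' with h | h
    · subst h
      dsimp [jk]
      rw [Category.assoc, kernel.condition]
      rfl
    · dsimp [jk]
      rw [Category.assoc, ih f' h, comp_zero]
      rfl

lemma jk_factor {X : A} (L : List (X ⟶ Q)) {T : A} (t : T ⟶ X) (ht : ∀ f ∈ L, t ≫ f = 0) :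
    ∃ t' : T ⟶ (jk L).1, t' ≫ (jk L).2 = t := by
  induction L with
  | nil => exact ⟨t, Category.comp_id t⟩
  | cons f L ih =>
    obtain ⟨t₁, h₁⟩ := ih (fun f' hf' => ht f' (List.mem_cons_of_mem f hf'))
    have hlift : t₁ ≫ ((jk L).2 ≫ f) = 0 := by
      rw [← Category.assoc, h₁]; exact ht f (List.mem_cons_self : f ∈ f :: L)
    refine ⟨kernel.lift ((jk L).2 ≫ f) t₁ hlift, ?_⟩
    dsimp [jk]
    rw [← Category.assoc, kernel.lift_ι, h₁]

/-- Rank-one step: if `b` vanishes wherever `a` does and `Q` is injective,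
then `b` factors through `a`. -/
lemma factor_of_ker (hQ : Injective Q) {X : A} (a b : X ⟶ Q)
    (h : ∀ (T : A) (t : T ⟶ X), t ≫ a = 0 → t ≫ b = 0) :
    ∃ φ : End Q, b = a ≫ φ := by
  haveI := hQ
  have hb : kernel.ι a ≫ b = 0 := h _ _ (kernel.condition a)
  obtain ⟨φ, hφ⟩ := Injective.factors (cokernel.desc (kernel.ι a) b hb)
    (Abelian.factorThruCoimage a)
  refine ⟨φ, ?_⟩
  calc b = cokernel.π (kernel.ι a) ≫ cokernel.desc (kernel.ι a) b hb :=
        (cokernel.π_desc _ _ _).symm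
    _ = cokernel.π (kernel.ι a) ≫ Abelian.factorThruCoimage a ≫ φ := by rw [hφ]
    _ = a ≫ φ := by rw [← Category.assoc, Abelian.coimage.fac]

lemma mem_span_of_vanish (hQ : Injective Q) {X : A} (L : List (X ⟶ Q)) (g : X ⟶ Q)
    (h : ∀ (T : A) (t : T ⟶ X), (∀ f ∈ L, t ≫ f = 0) → t ≫ g = 0) :
    g ∈ Submodule.span (End Q) {f | f ∈ L} := by
  induction L generalizing g with
  | nil =>
    have h0 : 𝟙 X ≫ g = 0 := h X (𝟙 X) (by simp)
    rw [Category.id_comp] at h0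
    simp [h0]
  | cons f L ih =>
    have hside : ∀ (T : A) (t : T ⟶ (jk L).1), t ≫ ((jk L).2 ≫ f) = 0 →
        t ≫ ((jk L).2 ≫ g) = 0 := by
      intro T t ht
      have h2 : ∀ f'' ∈ f :: L, (t ≫ (jk L).2) ≫ f'' = 0 := by
        intro f'' hf''
        rcases List.mem_cons.mp hf'' with hh | hh
        · subst hh; rw [Category.assoc]; exact ht
        · rw [Category.assoc, jk_vanish L f'' hh, comp_zero]
      have := h T (t ≫ (jk L).2) h2
      rw [Category.assoc] at this
      exact this
    obtain ⟨φ, hφ⟩ := factor_of_ker hQ ((jk L).2 ≫ f) ((jk L).2 ≫ g) hside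
    have hk : (jk L).2 ≫ (g - f ≫ φ) = 0 := by
      rw [Preadditive.comp_sub, ← Category.assoc, ← hφ, sub_self]
    have hg' : g - f ≫ φ ∈ Submodule.span (End Q) {f' | f' ∈ L} := by
      apply ih
      intro T t ht
      obtain ⟨t', ht'⟩ := jk_factor L t ht
      calc t ≫ (g - f ≫ φ) = t' ≫ ((jk L).2 ≫ (g - f ≫ φ)) := by
            rw [← Category.assoc, ht']
        _ = 0 := by rw [hk, comp_zero]
    have hgdec : g = (g - f ≫ φ) + φ • f := by
      rw [End.smul_right]; abel
    rw [hgdec]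
    refine Submodule.add_mem _ ?_ ?_
    · exact Submodule.span_mono (fun x hx => List.mem_cons_of_mem f hx) hg'
    · exact Submodule.smul_mem _ _ (Submodule.subset_span (List.mem_cons_self : f ∈ f :: L))

end Aux

section Sub
variable {Q W : A}

/-- The joint kernel as a subobject. -/
noncomputable def jkSub (L : List (W ⟶ Q)) : Subobject W :=
  haveI := jk_mono L
  Subobject.mk (jk L).2

lemma mk_le_jkSub {T : A} (t : T ⟶ W) [Mono t] (L : List (W ⟶ Q))
    (ht : ∀ f ∈ L, t ≫ f = 0) : Subobject.mk t ≤ jkSub L := by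
  haveI := jk_mono L
  obtain ⟨t', ht'⟩ := jk_factor L t ht
  exact Subobject.mk_le_mk_of_comm t' ht'

lemma jkSub_le_ker {L : List (W ⟶ Q)} {f : W ⟶ Q} (hf : f ∈ L) :
    jkSub L ≤ Subobject.mk (kernel.ι f) := by
  haveI := jk_mono L
  exact Subobject.mk_le_mk_of_comm (kernel.lift f (jk L).2 (jk_vanish L f hf))
    (kernel.lift_ι _ _ _)

lemma comp_eq_zero_of_mk_le_ker {T : A} (t : T ⟶ W) [Mono t] (g : W ⟶ Q)
    (h : Subobject.mk t ≤ Subobject.mk (kernel.ι g)) : t ≫ g = 0 := by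
  rw [← Subobject.ofMkLEMk_comp h, Category.assoc, kernel.condition, comp_zero]

lemma jkSub_append_le_left (L₁ L₂ : List (W ⟶ Q)) : jkSub (L₁ ++ L₂) ≤ jkSub L₁ := by
  haveI := jk_mono (Q := Q) (L₁ ++ L₂)
  exact mk_le_jkSub _ L₁ fun f hf => jk_vanish (L₁ ++ L₂) f (List.mem_append_left L₂ hf)

lemma jkSub_append_le_right (L₁ L₂ : List (W ⟶ Q)) : jkSub (L₁ ++ L₂) ≤ jkSub L₂ := by
  haveI := jk_mono (Q := Q) (L₁ ++ L₂)
  exact mk_le_jkSub _ L₂ fun f hf => jk_vanish (L₁ ++ L₂) f (List.mem_append_right L₁ hf)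

lemma comp_eq_zero_of_jkSub_le_ker {L : List (W ⟶ Q)} {g : W ⟶ Q}
    (h : jkSub L ≤ Subobject.mk (kernel.ι g)) : (jk L).2 ≫ g = 0 := by
  haveI := jk_mono L
  exact comp_eq_zero_of_mk_le_ker _ g h

end Sub

theorem main {Q W : A} (hQ : Injective Q)
    (wfGT : WellFoundedGT (Subobject W)) (wfLT : WellFoundedLT (Subobject W)) :
    IsFiniteLength (End Q) (W ⟶ Q) := by
  classical
  set S : Submodule (End Q) (W ⟶ Q) → Set (Subobject W) :=
    fun M => {U | ∃ L : List (W ⟶ Q), (∀ f ∈ L, f ∈ M) ∧ U = jkSub L} with hS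
  have hne : ∀ M, (S M).Nonempty := fun M => ⟨jkSub [], [], by simp, rfl⟩
  have hmin : ∀ M, ∃ U ∈ S M, ∀ V ∈ S M, U ≤ V := by
    intro M
    obtain ⟨U, hU, hUmin⟩ := wfLT.wf.has_min (S M) (hne M)
    refine ⟨U, hU, ?_⟩
    intro V hV
    obtain ⟨L₁, hL₁, rfl⟩ := hU
    obtain ⟨L₂, hL₂, rfl⟩ := hV
    have h12 : jkSub (L₁ ++ L₂) ∈ S M := by
      refine ⟨L₁ ++ L₂, ?_, rfl⟩
      intro f hf
      rcases List.mem_append.mp hf with h | h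
      · exact hL₁ f h
      · exact hL₂ f h
    have hle1 : jkSub (L₁ ++ L₂) ≤ jkSub L₁ := jkSub_append_le_left L₁ L₂
    have heq : jkSub (L₁ ++ L₂) = jkSub L₁ := by
      rcases lt_or_eq_of_le hle1 with h | h
      · exact absurd h (hUmin _ h12)
      · exact h
    rw [← heq]
    exact jkSub_append_le_right L₁ L₂
  choose Φ hΦmem hΦle using hmin
  have key : ∀ (M : Submodule (End Q) (W ⟶ Q)) (g : W ⟶ Q),
      Φ M ≤ Subobject.mk (kernel.ι g) → g ∈ M := by
    intro M g hg
    obtain ⟨L, hLM, hΦ⟩ := hΦmem M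
    have hz : (jk L).2 ≫ g = 0 := comp_eq_zero_of_jkSub_le_ker (hΦ ▸ hg)
    have hspan : g ∈ Submodule.span (End Q) {f | f ∈ L} := by
      apply mem_span_of_vanish hQ
      intro T t ht
      obtain ⟨t', ht'⟩ := jk_factor L t ht
      calc t ≫ g = t' ≫ ((jk L).2 ≫ g) := by rw [← Category.assoc, ht']
        _ = 0 := by rw [hz, comp_zero]
    exact Submodule.span_le.mpr (fun x hx => hLM x hx) hspan
  have keyD : ∀ (M : Submodule (End Q) (W ⟶ Q)) (g : W ⟶ Q), g ∈ M →
      Φ M ≤ Subobject.mk (kernel.ι g) := by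
    intro M g hg
    have h1 : Φ M ≤ jkSub [g] := hΦle M _ ⟨[g], by simpa using hg, rfl⟩
    exact h1.trans (jkSub_le_ker (List.mem_singleton_self g))
  have strict : ∀ M N : Submodule (End Q) (W ⟶ Q), M < N → Φ N < Φ M := by
    intro M N hMN
    have hle : Φ N ≤ Φ M := by
      refine hΦle N (Φ M) ?_
      obtain ⟨L, hLM, hΦ⟩ := hΦmem M
      exact ⟨L, fun f hf => hMN.le (hLM f hf), hΦ⟩
    refine lt_of_le_of_ne hle ?_
    intro heq
    obtain ⟨g, hgN, hgM⟩ := SetLike.exists_of_lt hMN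
    exact hgM (key M g (heq ▸ keyD N g hgN))
  rw [isFiniteLength_iff_isNoetherian_isArtinian]
  constructor
  · rw [isNoetherian_iff']
    refine ⟨Subrelation.wf (r := InvImage (· < ·) Φ) ?_ (InvImage.wf Φ wfLT.wf)⟩
    intro a b hab
    exact strict b a hab
  · rw [isArtinian_iff]
    refine Subrelation.wf (r := InvImage (· > ·) Φ) ?_ (InvImage.wf Φ wfGT.wf)
    intro a b hab
    exact strict a b hab

theorem injective_finite_endolength_of_locally_finite
    [HasFilteredColimitsOfSize.{v, v} A] [HasBinaryBiproducts A]
    -- `A` is Grothendieck: filtered colimits are exact (AB5)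
    [AB5 A]
    -- the finitely presented objects form a skeletally small abelian subcategory
    (hsmall : EssentiallySmall.{v} (ObjectProperty.FullSubcategory fun X : A => FinPres X))
    (hker : ∀ ⦃X Y : A⦄ (f : X ⟶ Y), FinPres X → FinPres Y → FinPres (kernel f))
    (hcoker : ∀ ⦃X Y : A⦄ (f : X ⟶ Y), FinPres X → FinPres Y → FinPres (cokernel f))
    (hbiprod : ∀ X Y : A, FinPres X → FinPres Y → FinPres (X ⊞ Y))
    -- every object is a filtered colimit of finitely presented objects
    (hcolim : ∀ X : A, Nonempty (FilteredPresentation (FinPres (A := A)) X))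
    -- `A` is locally finite: every finitely presented object has finite length
    (hlf : ∀ X : A, FinPres X → FiniteLengthObj X) :
    ∀ Q : A, Injective Q → ∀ W : A, FinPres W → IsFiniteLength (End Q) (W ⟶ Q) := by
  intro Q hQ W hW
  obtain ⟨wfGT, wfLT⟩ := hlf W hW
  exact main hQ wfGT wfLT
end

section
/- Let C be a skeletally small triangulated category with a generator X (i.e., the smallest thick subcategory containing X is C). Then every prime rank function on C is irreducible. -/
/-!
Statement 10: If a skeletally small triangulated category `C` has a generator `X` (the
smallest thick subcategory containing `X` is all of `C`), then every prime rank function on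
`C` is irreducible.
-/

open CategoryTheory CategoryTheory.Limits CategoryTheory.Pretriangulated ZeroObject

universe v u

variable (C : Type u) [Category.{v} C] [Preadditive C] [HasZeroObject C] [HasShift C ℤ]
  [∀ n : ℤ, (shiftFunctor C n).Additive] [Pretriangulated C] [HasBinaryBiproducts C]
  [EssentiallySmall.{v} C]

/-- A rank function on a triangulated category. -/
structure RankFunction where
  rank : ∀ ⦃X Y : C⦄, (X ⟶ Y) → ℝ
  nonneg : ∀ ⦃X Y : C⦄ (f : X ⟶ Y), 0 ≤ rank f
  additive : ∀ ⦃X₁ Y₁ X₂ Y₂ : C⦄ (f : X₁ ⟶ Y₁) (g : X₂ ⟶ Y₂),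
    rank (biprod.map f g) = rank f + rank g
  rankNullity : ∀ (T : Triangle C), (T ∈ distTriang C) →
    rank T.mor₁ + rank T.mor₂ = rank (𝟙 T.obj₂)
  shiftInv : ∀ ⦃X Y : C⦄ (f : X ⟶ Y),
    rank ((shiftFunctor C (1 : ℤ)).map f) = rank f

/-- A thick subcategory of `C`, encoded as a set of objects: it contains the zero objects,
is closed under isomorphisms, shifts, extensions (cones) and direct summands. -/
structure IsThickSet (P : Set C) : Prop where
  zero : ∀ Z : C, IsZero Z → Z ∈ P
  iso : ∀ ⦃A B : C⦄, (A ≅ B) → A ∈ P → B ∈ P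
  shift : ∀ (A : C) (n : ℤ), A ∈ P → (shiftFunctor C n).obj A ∈ P
  ext₂ : ∀ (T : Triangle C), (T ∈ distTriang C) → T.obj₁ ∈ P → T.obj₃ ∈ P → T.obj₂ ∈ P
  summand : ∀ A B : C, (A ⊞ B) ∈ P → A ∈ P

/-- `X` is a generator of `C`: the smallest thick subcategory containing `X` is `C`. -/
def IsGenerator (X : C) : Prop :=
  ∀ P : Set C, IsThickSet C P → X ∈ P → ∀ Y : C, Y ∈ P

variable {C}

/-- Integral rank function. -/
def RankFunction.Integral (ρ : RankFunction C) : Prop :=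
  ∀ ⦃X Y : C⦄ (f : X ⟶ Y), ∃ n : ℤ, ρ.rank f = n

/-- Non-zero rank function. -/
def RankFunction.Nonzero (ρ : RankFunction C) : Prop :=
  ∃ (X Y : C) (f : X ⟶ Y), ρ.rank f ≠ 0

/-- Irreducible rank function. -/
def RankFunction.Irreducible (ρ : RankFunction C) : Prop :=
  ρ.Integral ∧ ρ.Nonzero ∧
    ¬ ∃ σ τ : RankFunction C, σ.Integral ∧ τ.Integral ∧ σ.Nonzero ∧ τ.Nonzero ∧
      ∀ ⦃X Y : C⦄ (f : X ⟶ Y), ρ.rank f = σ.rank f + τ.rank f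

/-- Prime rank function: integral, with a generator on whose identity it takes value 1. -/
def RankFunction.Prime (ρ : RankFunction C) : Prop :=
  ρ.Integral ∧ ∃ X : C, IsGenerator C X ∧ ρ.rank (𝟙 X) = 1

/-! ### Auxiliary lemmas -/

/-- rank of a morphism is bounded by the rank of the identity of its target. -/
lemma RankFunction.rank_le_target (ρ : RankFunction C) {A B : C} (f : A ⟶ B) :
    ρ.rank f ≤ ρ.rank (𝟙 B) := by
  obtain ⟨Z, g, h, hT⟩ := distinguished_cocone_triangle f
  have := ρ.rankNullity _ hT
  change ρ.rank f + ρ.rank g = ρ.rank (𝟙 B) at this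
  have hg := ρ.nonneg g
  linarith

/-- rank of a morphism is bounded by the rank of the identity of its source. -/
lemma RankFunction.rank_le_source (ρ : RankFunction C) {A B : C} (f : A ⟶ B) :
    ρ.rank f ≤ ρ.rank (𝟙 A) := by
  obtain ⟨Z, g, h, hT⟩ := distinguished_cocone_triangle f
  have key : ρ.rank (Triangle.invRotate (Triangle.mk f g h)).mor₁ + ρ.rank f
      = ρ.rank (𝟙 A) := ρ.rankNullity _ (inv_rot_of_distTriang _ hT)
  have hg := ρ.nonneg (Triangle.invRotate (Triangle.mk f g h)).mor₁
  linarith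

lemma RankFunction.rank_to_zero (ρ : RankFunction C) (B : C) :
    ρ.rank (0 : B ⟶ 0) = 0 := by
  have h1 : ρ.rank (𝟙 B) + ρ.rank (0 : B ⟶ 0) = ρ.rank (𝟙 B) :=
    ρ.rankNullity _ (contractible_distinguished B)
  have h2 := ρ.nonneg (0 : B ⟶ 0)
  linarith

/-- rank of identities is invariant under isomorphism. -/
lemma RankFunction.rank_id_iso (ρ : RankFunction C) {A B : C} (e : A ≅ B) :
    ρ.rank (𝟙 A) = ρ.rank (𝟙 B) := by
  have key : ∀ {A B : C} (e : A ≅ B), ρ.rank (𝟙 B) ≤ ρ.rank (𝟙 A) := by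
    intro A B e
    have hT : Triangle.mk e.hom (0 : B ⟶ 0) (0 : (0 : C) ⟶ A⟦(1 : ℤ)⟧) ∈ distTriang C := by
      refine isomorphic_distinguished _ (contractible_distinguished A) _ ?_
      exact Triangle.isoMk _ _ (Iso.refl A) e.symm (Iso.refl 0) (by simp; exact e.hom_inv_id.trans (Category.id_comp _).symm) (by simp; exact zero_comp.trans comp_zero.symm) (by simp; exact zero_comp.trans comp_zero.symm)
    have h1 : ρ.rank e.hom + ρ.rank (0 : B ⟶ 0) = ρ.rank (𝟙 B) := ρ.rankNullity _ hT
    have h2 := ρ.rank_to_zero B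
    have h3 := ρ.rank_le_source e.hom
    linarith
  exact le_antisymm (key e.symm) (key e)

lemma RankFunction.rank_id_of_isZero (ρ : RankFunction C) {Z : C} (hZ : IsZero Z) :
    ρ.rank (𝟙 Z) = 0 := by
  have hmap : biprod.map (𝟙 (0 : C)) (𝟙 (0 : C)) = 𝟙 ((0 : C) ⊞ (0 : C)) := by
    ext <;> simp
  have h0 : IsZero ((0 : C) ⊞ (0 : C)) := by
    rw [IsZero.iff_id_eq_zero]
    apply biprod.hom_ext <;> apply (isZero_zero C).eq_of_tgt
  have h1 : ρ.rank (𝟙 ((0 : C) ⊞ (0 : C))) = ρ.rank (𝟙 (0 : C)) + ρ.rank (𝟙 (0 : C)) := by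
    rw [← hmap]; exact ρ.additive _ _
  have h2 := ρ.rank_id_iso (h0.isoZero)
  have h3 := ρ.rank_id_iso (hZ.isoZero)
  rw [h1] at h2
  linarith

lemma RankFunction.rank_id_shift_one (ρ : RankFunction C) (Y : C) :
    ρ.rank (𝟙 ((shiftFunctor C (1 : ℤ)).obj Y)) = ρ.rank (𝟙 Y) := by
  rw [show (𝟙 ((shiftFunctor C (1 : ℤ)).obj Y)) = (shiftFunctor C (1 : ℤ)).map (𝟙 Y) by simp]
  exact ρ.shiftInv _

lemma RankFunction.rank_id_shift (ρ : RankFunction C) (A : C) (n : ℤ) :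
    ρ.rank (𝟙 ((shiftFunctor C n).obj A)) = ρ.rank (𝟙 A) := by
  induction n using Int.induction_on with
  | zero => exact ρ.rank_id_iso ((shiftFunctorZero C ℤ).app A)
  | succ n ih =>
    have e : (shiftFunctor C ((n : ℤ) + 1)).obj A ≅
        (shiftFunctor C (1 : ℤ)).obj ((shiftFunctor C (n : ℤ)).obj A) :=
      (shiftFunctorAdd C (n : ℤ) 1).app A
    rw [ρ.rank_id_iso e, ρ.rank_id_shift_one, ih]
  | pred n ih =>
    have e : (shiftFunctor C (1 : ℤ)).obj ((shiftFunctor C (-(n : ℤ) - 1)).obj A) ≅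
        (shiftFunctor C (-(n : ℤ))).obj A :=
      ((shiftFunctorAdd' C (-(n : ℤ) - 1) 1 (-(n : ℤ)) (by ring)).app A).symm
    rw [← ρ.rank_id_shift_one ((shiftFunctor C (-(n : ℤ) - 1)).obj A),
      ρ.rank_id_iso e, ih]

/-- If an integral rank function vanishes on the identity of a generator, it is zero. -/
lemma RankFunction.not_nonzero_of_gen (σ : RankFunction C) {X : C}
    (hX : IsGenerator C X) (h0 : σ.rank (𝟙 X) = 0) : ¬ σ.Nonzero := by
  set P : Set C := {A | σ.rank (𝟙 A) = 0} with hP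
  have hthick : IsThickSet C P := by
    constructor
    · intro Z hZ
      exact σ.rank_id_of_isZero hZ
    · intro A B e hA
      simpa [P] using (σ.rank_id_iso e).symm.trans hA
    · intro A n hA
      simpa [P] using (σ.rank_id_shift A n).trans hA
    · intro T hT h1 h3
      have := σ.rankNullity T hT
      have b1 : σ.rank T.mor₁ ≤ σ.rank (𝟙 T.obj₁) := σ.rank_le_source T.mor₁
      have b2 : σ.rank T.mor₂ ≤ σ.rank (𝟙 T.obj₃) := σ.rank_le_target T.mor₂
      have n1 := σ.nonneg T.mor₁
      have n2 := σ.nonneg T.mor₂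
      simp only [P, Set.mem_setOf_eq] at h1 h3 ⊢
      linarith
    · intro A B hAB
      have hmap : biprod.map (𝟙 A) (𝟙 B) = 𝟙 (A ⊞ B) := by ext <;> simp
      have := σ.additive (𝟙 A) (𝟙 B)
      rw [hmap] at this
      have nA := σ.nonneg (𝟙 A)
      have nB := σ.nonneg (𝟙 B)
      simp only [P, Set.mem_setOf_eq] at hAB ⊢
      linarith
  have hall : ∀ Y : C, σ.rank (𝟙 Y) = 0 := hX P hthick h0
  rintro ⟨A, B, f, hf⟩
  have h1 := σ.rank_le_target f
  have h2 := σ.nonneg f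
  rw [hall B] at h1
  exact hf (le_antisymm h1 h2)

theorem prime_rankFunction_irreducible (hgen : ∃ X : C, IsGenerator C X)
    (ρ : RankFunction C) (hprime : ρ.Prime) : ρ.Irreducible := by
  obtain ⟨hint, X, hXgen, hX1⟩ := hprime
  refine ⟨hint, ⟨X, X, 𝟙 X, by rw [hX1]; norm_num⟩, ?_⟩
  rintro ⟨σ, τ, hσint, hτint, hσnz, hτnz, hsum⟩
  obtain ⟨n, hn⟩ := hσint (𝟙 X)
  obtain ⟨m, hm⟩ := hτint (𝟙 X)
  have hnm : (n : ℝ) + (m : ℝ) = 1 := by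
    rw [← hn, ← hm, ← hsum (𝟙 X), hX1]
  have hnm' : n + m = 1 := by exact_mod_cast hnm
  have hn0 : 0 ≤ n := by exact_mod_cast hn ▸ σ.nonneg (𝟙 X)
  have hm0 : 0 ≤ m := by exact_mod_cast hm ▸ τ.nonneg (𝟙 X)
  have : n = 0 ∨ m = 0 := by omega
  rcases this with h | h
  · exact σ.not_nonzero_of_gen hXgen (by rw [hn, h]; norm_num) hσnz
  · exact τ.not_nonzero_of_gen hXgen (by rw [hm, h]; norm_num) hτnz
end

section
/- Let ρ be a rank function on a skeletally small triangulated category C. Then the kernel on objects Ker ρ_ob = {X in C : ρ(1_X) = 0} is a thick subcategory of C. -/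
/-!
Statement 11: For a rank function `ρ` on a skeletally small triangulated category `C`, the
kernel on objects `Ker ρ_ob = {X : ρ(1_X) = 0}` is a thick subcategory of `C`.
-/

open CategoryTheory CategoryTheory.Limits CategoryTheory.Pretriangulated

universe v u

variable (C : Type u) [Category.{v} C] [Preadditive C] [HasZeroObject C] [HasShift C ℤ]
  [∀ n : ℤ, (shiftFunctor C n).Additive] [Pretriangulated C] [HasBinaryBiproducts C]
  [EssentiallySmall.{v} C]

variable {C}

namespace RankFunction

open ZeroObject

variable (ρ : RankFunction C)

lemma rank_tgt_zero {A Z : C} (hZ : IsZero Z) (f : A ⟶ Z) : ρ.rank f = 0 := by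
  have hdist : Triangle.mk (𝟙 A) f (0 : Z ⟶ A⟦(1 : ℤ)⟧) ∈ distTriang C := by
    refine isomorphic_distinguished _ (contractible_distinguished A) _ ?_
    refine Triangle.isoMk _ _ (Iso.refl _) (Iso.refl _) hZ.isoZero ?_ ?_ ?_
    · rfl
    · exact (isZero_zero C).eq_of_tgt _ _
    · exact hZ.eq_of_src _ _
  have h := ρ.rankNullity _ hdist
  have h2 := ρ.nonneg f
  dsimp [Triangle.mk] at h
  linarith

lemma rank_src_zero {Z A : C} (hZ : IsZero Z) (f : Z ⟶ A) : ρ.rank f = 0 := by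
  have h0 : IsZero ((0 : C)⟦(-1 : ℤ)⟧) :=
    (shiftFunctor C (-1 : ℤ)).map_isZero (isZero_zero C)
  have hdist : Triangle.mk f (𝟙 A) (0 : A ⟶ Z⟦(1 : ℤ)⟧) ∈ distTriang C := by
    refine isomorphic_distinguished _
      (inv_rot_of_distTriang _ (contractible_distinguished A)) _ ?_
    refine Triangle.isoMk _ _ (hZ.iso h0) (Iso.refl _) (Iso.refl _) ?_ ?_ ?_
    · exact hZ.eq_of_src _ _
    · rfl
    · exact ((shiftFunctor C (1 : ℤ)).map_isZero h0).eq_of_tgt _ _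
  have h := ρ.rankNullity _ hdist
  dsimp [Triangle.mk] at h
  linarith

lemma rank_id_eq_of_iso {A B : C} (e : A ≅ B) : ρ.rank (𝟙 A) = ρ.rank (𝟙 B) := by
  have hdist : Triangle.mk e.hom (0 : B ⟶ (0 : C)) (0 : (0 : C) ⟶ A⟦(1 : ℤ)⟧) ∈ distTriang C := by
    refine isomorphic_distinguished _ (contractible_distinguished A) _ ?_
    refine Triangle.isoMk _ _ (Iso.refl _) e.symm (Iso.refl _) ?_ ?_ ?_
    · exact e.hom_inv_id.trans (Category.comp_id _).symm
    · exact (isZero_zero C).eq_of_tgt _ _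
    · exact (isZero_zero C).eq_of_src _ _
  have h1 := ρ.rankNullity _ hdist
  have h2 := ρ.rankNullity _ (inv_rot_of_distTriang _ hdist)
  have h3 : ρ.rank (0 : B ⟶ (0 : C)) = 0 := ρ.rank_tgt_zero (isZero_zero C) _
  have h4 : ρ.rank ((Triangle.mk e.hom (0 : B ⟶ (0 : C))
      (0 : (0 : C) ⟶ A⟦(1 : ℤ)⟧)).invRotate.mor₁) = 0 :=
    ρ.rank_src_zero ((shiftFunctor C (-1 : ℤ)).map_isZero (isZero_zero C)) _
  change ρ.rank e.hom + ρ.rank (0 : B ⟶ (0 : C)) = ρ.rank (𝟙 B) at h1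
  change ρ.rank ((Triangle.mk e.hom (0 : B ⟶ (0 : C))
      (0 : (0 : C) ⟶ A⟦(1 : ℤ)⟧)).invRotate.mor₁) + ρ.rank e.hom = ρ.rank (𝟙 A) at h2
  linarith

lemma rank_id_shift_s11 (n : ℤ) (A : C) :
    ρ.rank (𝟙 ((shiftFunctor C n).obj A)) = ρ.rank (𝟙 A) := by
  induction n using Int.induction_on with
  | zero => exact ρ.rank_id_eq_of_iso ((shiftFunctorZero C ℤ).app A)
  | succ n ih =>
      have e : (shiftFunctor C ((n : ℤ) + 1)).obj A ≅
          (shiftFunctor C (1 : ℤ)).obj ((shiftFunctor C (n : ℤ)).obj A) :=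
        (shiftFunctorAdd C (n : ℤ) 1).app A
      have hs := ρ.shiftInv (𝟙 ((shiftFunctor C (n : ℤ)).obj A))
      rw [CategoryTheory.Functor.map_id] at hs
      rw [ρ.rank_id_eq_of_iso e, hs, ih]
  | pred n ih =>
      have e : (shiftFunctor C (-(n : ℤ))).obj A ≅
          (shiftFunctor C (1 : ℤ)).obj ((shiftFunctor C (-(n : ℤ) - 1)).obj A) :=
        (shiftFunctorAdd' C (-(n : ℤ) - 1) 1 (-(n : ℤ)) (by ring)).app A
      have hs := ρ.shiftInv (𝟙 ((shiftFunctor C (-(n : ℤ) - 1)).obj A))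
      rw [CategoryTheory.Functor.map_id] at hs
      rw [← ih, ρ.rank_id_eq_of_iso e, hs]

end RankFunction

theorem kernel_on_objects_isThick (ρ : RankFunction C) :
    IsThickSet C {X : C | ρ.rank (𝟙 X) = 0} := by
  constructor
  · intro Z hZ
    exact ρ.rank_tgt_zero hZ _
  · intro A B e hA
    exact (ρ.rank_id_eq_of_iso e).symm.trans hA
  · intro A n hA
    exact (ρ.rank_id_shift_s11 n A).trans hA
  · intro T hT h1 h3
    have hm1 : ρ.rank T.mor₁ = 0 := by
      have h := ρ.rankNullity _ (inv_rot_of_distTriang _ hT)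
      dsimp [Triangle.invRotate, Triangle.mk] at h
      have := ρ.nonneg T.invRotate.mor₁
      dsimp [Triangle.invRotate, Triangle.mk] at this
      have h1' : ρ.rank (𝟙 T.obj₁) = 0 := h1
      have := ρ.nonneg T.mor₁
      linarith
    have hm2 : ρ.rank T.mor₂ = 0 := by
      have h := ρ.rankNullity _ (rot_of_distTriang _ hT)
      dsimp [Triangle.rotate, Triangle.mk] at h
      have h3' : ρ.rank (𝟙 T.obj₃) = 0 := h3
      have := ρ.nonneg T.mor₃
      have := ρ.nonneg T.mor₂
      linarith
    have h := ρ.rankNullity _ hT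
    show ρ.rank (𝟙 T.obj₂) = 0
    linarith
  · intro A B hAB
    have h : ρ.rank (biprod.map (𝟙 A) (𝟙 B)) = ρ.rank (𝟙 A) + ρ.rank (𝟙 B) :=
      ρ.additive _ _
    have hid : biprod.map (𝟙 A) (𝟙 B) = 𝟙 (A ⊞ B) := by aesop_cat
    rw [hid] at h
    have hAB' : ρ.rank (𝟙 (A ⊞ B)) = 0 := hAB
    have := ρ.nonneg (𝟙 A)
    have := ρ.nonneg (𝟙 B)
    show ρ.rank (𝟙 A) = 0
    linarith
end

section
/- Let ρ be an integral rank function on a skeletally small triangulated category C and let κ : C → C/Ker ρ_ob denote the Verdier localisation at the thick subcategory Ker ρ_ob. Then ρ is localising if and only if Ker(κ*|_{mod C}) = Ker ρ̃, where ρ̃ is the additive function on mod C corresponding to ρ. -/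
/-!
Statement 13: Let `ρ` be an integral rank function on a skeletally small triangulated
category `C` and let `κ : C ⥤ D` be the Verdier localisation at the thick subcategory
`Ker ρ_ob`. Then `ρ` is localising iff `Ker (κ*|_{mod C}) = Ker ρ̃`; via Yoneda this says:
`ρ` is localising iff for all `f`, `ρ(f) = 0 ↔ κ(f) = 0`.
-/

open CategoryTheory CategoryTheory.Limits CategoryTheory.Pretriangulated

universe v u v' u'

variable (C : Type u) [Category.{v} C] [Preadditive C] [HasZeroObject C] [HasShift C ℤ]
  [∀ n : ℤ, (shiftFunctor C n).Additive] [Pretriangulated C] [HasBinaryBiproducts C]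
  [EssentiallySmall.{v} C]

/-- The structure `Triangulated.Subcategory` of the older Mathlib (since removed),
restated with its old meaning. -/
structure Triangulated.Subcategory where
  P : C → Prop
  zero' : ∃ (Z : C) (_ : IsZero Z), P Z
  shift (X : C) (n : ℤ) : P X → P (X⟦n⟧)
  ext₂' (T : Triangle C) (_ : T ∈ distTriang C) : P T.obj₁ → P T.obj₃ → ObjectProperty.isoClosure P T.obj₂

variable {C}

/-- The class of morphisms whose cone satisfies `S.P` (old `Triangulated.Subcategory.W`). -/
def Triangulated.Subcategory.W (S : Triangulated.Subcategory C) : MorphismProperty C :=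
  fun X Y f => ∃ (Z : C) (g : Y ⟶ Z) (h : Z ⟶ X⟦(1 : ℤ)⟧)
    (_ : Triangle.mk f g h ∈ distTriang C), S.P Z

open ZeroObject

attribute [local simp] Triangle.mk Triangle.rotate Triangle.invRotate

set_option linter.unusedSectionVars false


namespace RankFunction

variable (ρ : RankFunction C)

lemma rank_le_tgt {X Y : C} (f : X ⟶ Y) : ρ.rank f ≤ ρ.rank (𝟙 Y) := by
  obtain ⟨Z, g, h, hT⟩ := distinguished_cocone_triangle f
  have h1 := ρ.rankNullity _ hT
  have h2 := ρ.nonneg g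
  dsimp at h1
  linarith

lemma rank_le_src {X Y : C} (f : X ⟶ Y) : ρ.rank f ≤ ρ.rank (𝟙 X) := by
  obtain ⟨Z, g, h, hT⟩ := distinguished_cocone_triangle₁ f
  have h1 := ρ.rankNullity _ hT
  have h2 := ρ.nonneg g
  dsimp at h1
  linarith

lemma rank_precomp_iso {X' X Y : C} (e : X' ⟶ X) [IsIso e] (f : X ⟶ Y) :
    ρ.rank (e ≫ f) = ρ.rank f := by
  obtain ⟨Z, g, h, hT⟩ := distinguished_cocone_triangle f
  have hT' : Triangle.mk (e ≫ f) g (h ≫ (inv e)⟦(1 : ℤ)⟧') ∈ distTriang C := by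
    refine isomorphic_distinguished _ hT _ ?_
    refine Triangle.isoMk _ _ (asIso e : X' ≅ X) (Iso.refl _) (Iso.refl _) (by simp) (by simp) ?_
    dsimp
    rw [Category.assoc, ← Functor.map_comp, IsIso.inv_hom_id, CategoryTheory.Functor.map_id,
      Category.comp_id, Category.id_comp]
  have h1 := ρ.rankNullity _ hT
  have h2 := ρ.rankNullity _ hT'
  dsimp at h1 h2
  linarith

lemma rank_id_zeroObj : ρ.rank (𝟙 (0 : C)) = 0 := by
  have h1 := ρ.rankNullity _ (contractible_distinguished (0 : C))
  have e : (0 : (0 : C) ⟶ 0) = 𝟙 (0 : C) := (Limits.isZero_zero C).eq_of_src _ _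
  dsimp [contractibleTriangle] at h1
  rw [e] at h1
  linarith

lemma rank_iso_triangle {Y Y' : C} (e : Y ⟶ Y') [IsIso e] :
    Triangle.mk e (0 : Y' ⟶ 0) (0 : (0 : C) ⟶ Y⟦(1 : ℤ)⟧) ∈ distTriang C := by
  refine isomorphic_distinguished _ (contractible_distinguished Y) _ ?_
  exact Triangle.isoMk _ _ (Iso.refl _) (asIso e : Y ≅ Y').symm (Iso.refl _)
    (by dsimp; simp; exact (IsIso.hom_inv_id e).trans (Category.id_comp _).symm)
    (by dsimp; simp; exact zero_comp.trans comp_zero.symm) (by dsimp; simp; exact zero_comp.symm)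

lemma rank_iso_eq_tgt {Y Y' : C} (e : Y ⟶ Y') [IsIso e] : ρ.rank e = ρ.rank (𝟙 Y') := by
  have h1 := ρ.rankNullity _ (rank_iso_triangle e)
  have h2 := ρ.nonneg (0 : Y' ⟶ (0 : C))
  have h3 : ρ.rank (0 : Y' ⟶ (0 : C)) ≤ ρ.rank (𝟙 (0 : C)) := ρ.rank_le_tgt _
  have h4 := ρ.rank_id_zeroObj
  dsimp at h1
  linarith

lemma rank_id_shift_s13 (X : C) : ρ.rank (𝟙 (X⟦(1 : ℤ)⟧)) = ρ.rank (𝟙 X) := by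
  have h : (shiftFunctor C (1 : ℤ)).map (𝟙 X) = 𝟙 (X⟦(1 : ℤ)⟧) := CategoryTheory.Functor.map_id _ _
  rw [← h]
  exact ρ.shiftInv _

lemma rank_neg {X Y : C} (f : X ⟶ Y) : ρ.rank (-f) = ρ.rank f := by
  have : IsIso (-𝟙 X) := ⟨⟨-𝟙 X, by simp, by simp⟩⟩
  have h : -f = (-𝟙 X) ≫ f := by simp
  rw [h, ρ.rank_precomp_iso]

lemma rank_id_iso_s13 {Y Y' : C} (e : Y ≅ Y') : ρ.rank (𝟙 Y) = ρ.rank (𝟙 Y') := by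
  have hT := rank_iso_triangle e.hom
  have hT2 := rot_of_distTriang _ (rot_of_distTriang _ hT)
  have h1 := ρ.rankNullity _ hT2
  dsimp at h1
  have h2 : ρ.rank (0 : (0 : C) ⟶ Y⟦(1 : ℤ)⟧) ≤ ρ.rank (𝟙 (0 : C)) := ρ.rank_le_src _
  have h3 := ρ.nonneg (0 : (0 : C) ⟶ Y⟦(1 : ℤ)⟧)
  have h4 := ρ.rank_id_zeroObj
  have h5 : ρ.rank (-(e.hom⟦(1 : ℤ)⟧')) = ρ.rank e.hom := by
    rw [ρ.rank_neg, ρ.shiftInv]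
  have h6 := ρ.rank_id_shift_s13 Y
  have h7 := ρ.rank_iso_eq_tgt e.hom
  rw [h5] at h1
  linarith

lemma rank_postcomp_iso {X Y Y' : C} (f : X ⟶ Y) (e : Y ⟶ Y') [IsIso e] :
    ρ.rank (f ≫ e) = ρ.rank f := by
  obtain ⟨Z, g, h, hT⟩ := distinguished_cocone_triangle f
  have hT' : Triangle.mk (f ≫ e) (inv e ≫ g) h ∈ distTriang C := by
    refine isomorphic_distinguished _ hT _ ?_
    exact Triangle.isoMk _ _ (Iso.refl _) (asIso e : Y ≅ Y').symm (Iso.refl _)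
      (by simp) (by simp) (by simp)
  have h1 := ρ.rankNullity _ hT
  have h2 := ρ.rankNullity _ hT'
  have h3 := ρ.rank_precomp_iso (inv e) g
  have h4 := ρ.rank_id_iso_s13 (asIso e)
  dsimp at h1 h2
  linarith

lemma rank_id_biprod (A B : C) : ρ.rank (𝟙 (A ⊞ B)) = ρ.rank (𝟙 A) + ρ.rank (𝟙 B) := by
  have h : biprod.map (𝟙 A) (𝟙 B) = 𝟙 (A ⊞ B) := by ext <;> simp
  rw [← h, ρ.additive]

lemma rank_cone_id (T : Triangle C) (hT : T ∈ distTriang C) :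
    ρ.rank (𝟙 T.obj₃) = ρ.rank (𝟙 T.obj₁) + ρ.rank (𝟙 T.obj₂) - 2 * ρ.rank T.mor₁ := by
  have h1 := ρ.rankNullity _ hT
  have h2 := ρ.rankNullity _ (rot_of_distTriang _ hT)
  have h3 := ρ.rankNullity _ (rot_of_distTriang _ (rot_of_distTriang _ hT))
  dsimp at h2 h3
  have h4 : ρ.rank (-(T.mor₁⟦(1 : ℤ)⟧')) = ρ.rank T.mor₁ := by
    rw [ρ.rank_neg, ρ.shiftInv]
  have h5 := ρ.rank_id_shift_s13 T.obj₁
  rw [h4] at h3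
  linarith

lemma rank_ends_eq_of_zero₃ (T : Triangle C) (hT : T ∈ distTriang C)
    (h3 : ρ.rank (𝟙 T.obj₃) = 0) : ρ.rank (𝟙 T.obj₁) = ρ.rank (𝟙 T.obj₂) := by
  have h1 := ρ.rankNullity _ hT
  have h2 := ρ.rank_cone_id _ hT
  have h4 : ρ.rank T.mor₂ ≤ ρ.rank (𝟙 T.obj₃) := ρ.rank_le_tgt _
  have h5 := ρ.nonneg T.mor₂
  linarith

lemma rank_id_shift_neg (X : C) : ρ.rank (𝟙 (X⟦(-1 : ℤ)⟧)) = ρ.rank (𝟙 X) := by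
  rw [← ρ.rank_id_shift_s13 (X⟦(-1 : ℤ)⟧)]
  exact ρ.rank_id_iso_s13 ((shiftEquiv C (1 : ℤ)).counitIso.app X)

end RankFunction

namespace Stmt13

open RankFunction

/-- Factorization through a rank-zero object. -/
def Ifac (ρ : RankFunction C) {X Y : C} (f : X ⟶ Y) : Prop :=
  ∃ (K : C) (g : X ⟶ K) (g' : K ⟶ Y), ρ.rank (𝟙 K) = 0 ∧ f = g ≫ g'

lemma ifac_zero (ρ : RankFunction C) (X Y : C) : Ifac ρ (0 : X ⟶ Y) :=
  ⟨0, 0, 0, ρ.rank_id_zeroObj, by simp⟩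

lemma ifac_add {ρ : RankFunction C} {X Y : C} {f f' : X ⟶ Y} (h : Ifac ρ f)
    (h' : Ifac ρ f') : Ifac ρ (f + f') := by
  obtain ⟨K, g, g', hK, rfl⟩ := h
  obtain ⟨L, k, k', hL, rfl⟩ := h'
  refine ⟨K ⊞ L, biprod.lift g k, biprod.desc g' k', ?_, by simp⟩
  rw [ρ.rank_id_biprod, hK, hL]
  norm_num

lemma ifac_of_comp_eq_zero {ρ : RankFunction C} {S : Triangulated.Subcategory C}
    (hS : ∀ X : C, S.P X ↔ ρ.rank (𝟙 X) = 0)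
    {X Y Y' : C} {s : Y ⟶ Y'} (hs : S.W s) (f : X ⟶ Y) (hf : f ≫ s = 0) :
    Ifac ρ f := by
  obtain ⟨Z, g, h, hT, hZ⟩ := hs
  have hT' := inv_rot_of_distTriang _ hT
  obtain ⟨w, hw⟩ := Triangle.coyoneda_exact₂ _ hT' f hf
  refine ⟨_, w, _, ?_, hw⟩
  dsimp
  rw [ρ.rank_id_shift_neg]
  exact (hS Z).mp hZ

/-- Lemma L. -/
lemma ifac_cancel_single {ρ : RankFunction C} {S : Triangulated.Subcategory C}
    (hS : ∀ X : C, S.P X ↔ ρ.rank (𝟙 X) = 0)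
    {X Y Y' : C} {s : Y ⟶ Y'} (hs : S.W s) (f : X ⟶ Y) (hf : Ifac ρ (f ≫ s)) :
    Ifac ρ f := by
  obtain ⟨Z, g, h, hT, hZ⟩ := hs
  have hZ0 : ρ.rank (𝟙 Z) = 0 := (hS Z).mp hZ
  obtain ⟨K, u, v, hK, huv⟩ := hf
  obtain ⟨E, i, π, hTε⟩ := distinguished_cocone_triangle (v ≫ g)
  have hE : ρ.rank (𝟙 E) = 0 := by
    have h1 := ρ.rank_cone_id _ hTε
    have h2 := ρ.nonneg (v ≫ g)
    have h3 := ρ.nonneg (𝟙 E)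
    dsimp at h1
    linarith
  have hu0 : u ≫ (v ≫ g) = 0 := by
    have hvg := comp_distTriang_mor_zero₁₂ _ hT
    change s ≫ g = 0 at hvg
    rw [← Category.assoc, ← huv, Category.assoc, hvg, comp_zero]
  have hTε' := inv_rot_of_distTriang _ hTε
  obtain ⟨u', hu'⟩ := Triangle.coyoneda_exact₂ _ hTε' u hu0
  -- the fiber map  m : E⟦-1⟧ ⟶ K
  set m := (Triangle.mk (v ≫ g) i π).invRotate.mor₁ with hm
  have hπ : (m ≫ v) ≫ g = 0 := by
    have hc := comp_distTriang_mor_zero₁₂ _ hTε'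
    dsimp only [Triangle.invRotate] at hc ⊢
    exact (Category.assoc m v g).trans hc
  obtain ⟨ω₀, hω₀⟩ := Triangle.coyoneda_exact₂ _ hT (m ≫ v) hπ
  let ω : (Triangle.mk (v ≫ g) i π).invRotate.obj₁ ⟶ Y := ω₀
  have hω : m ≫ v = ω ≫ s := hω₀
  have hδ : (f - u' ≫ ω) ≫ s = 0 := by
    have e1 : u' ≫ (ω ≫ s) = u ≫ v := by
      rw [← hω]
      exact (Category.assoc u' m v).symm.trans (congrArg (· ≫ v) hu'.symm)
    rw [Preadditive.sub_comp, huv, Category.assoc, e1, sub_self]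
  have h1 : Ifac ρ (f - u' ≫ ω) := ifac_of_comp_eq_zero hS ⟨Z, g, h, hT, hZ⟩ _ hδ
  have h2 : Ifac ρ (u' ≫ ω) := by
    refine ⟨_, u', ω, ?_, rfl⟩
    dsimp
    rw [ρ.rank_id_shift_neg]
    exact hE
  have h3 := ifac_add h1 h2
  simpa using h3

variable (S : Triangulated.Subcategory C)

/-- Multiplicative closure of `S.W`. -/
inductive MClos : ∀ ⦃X Y : C⦄, (X ⟶ Y) → Prop
  | of ⦃X Y : C⦄ (f : X ⟶ Y) (hf : S.W f) : MClos f
  | id (X : C) : MClos (𝟙 X)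
  | comp ⦃X Y Z : C⦄ (f : X ⟶ Y) (g : Y ⟶ Z) (hf : MClos f) (hg : MClos g) :
      MClos (f ≫ g)

/-- `MClos` as a `MorphismProperty`. -/
def MP : MorphismProperty C := fun _ _ f => MClos S f

instance : (MP S).IsMultiplicative where
  id_mem X := MClos.id X
  comp_mem f g hf hg := MClos.comp f g hf hg

variable {S}

lemma ifac_cancel {ρ : RankFunction C}
    (hS : ∀ X : C, S.P X ↔ ρ.rank (𝟙 X) = 0)
    {Y Y' : C} {s : Y ⟶ Y'} (hs : MClos S s) :
    ∀ ⦃X : C⦄ (f : X ⟶ Y), Ifac ρ (f ≫ s) → Ifac ρ f := by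
  induction hs with
  | of s hs => exact fun X f h => ifac_cancel_single hS hs f h
  | id Y => exact fun X f h => by simpa using h
  | comp s₁ s₂ h₁ h₂ ih₁ ih₂ =>
      exact fun X f h => ih₁ _ (ih₂ _ (by rwa [← Category.assoc] at h))

lemma ifac_of_mclos_zero {ρ : RankFunction C}
    (hS : ∀ X : C, S.P X ↔ ρ.rank (𝟙 X) = 0)
    {X Y Y' : C} {s : Y ⟶ Y'} (hs : MClos S s) (f : X ⟶ Y) (hf : f ≫ s = 0) :
    Ifac ρ f :=
  ifac_cancel hS hs f (by rw [hf]; exact ifac_zero ρ _ _)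

section Fractions

variable (S : Triangulated.Subcategory C)

lemma ore_single {X' X Y : C} (s : X' ⟶ X) (hs : S.W s) (f : X' ⟶ Y) :
    ∃ (Y' : C) (f' : X ⟶ Y') (s' : Y ⟶ Y') (_ : S.W s'), f ≫ s' = s ≫ f' := by
  obtain ⟨Z, g, h, H, mem⟩ := hs
  obtain ⟨Y', s', f', mem'⟩ := distinguished_cocone_triangle₂ (h ≫ f⟦(1 : ℤ)⟧')
  obtain ⟨b, hb₁, _⟩ := complete_distinguished_triangle_morphism₂ _ _ H mem' f (𝟙 Z) (by simp)
  exact ⟨Y', b, s', ⟨Z, f', h ≫ f⟦(1 : ℤ)⟧', mem', mem⟩, hb₁.symm⟩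

lemma ore_mclos {X' X : C} {s : X' ⟶ X} (hs : MClos S s) :
    ∀ ⦃Y : C⦄ (f : X' ⟶ Y),
      ∃ (Y' : C) (f' : X ⟶ Y') (s' : Y ⟶ Y') (_ : MClos S s'), f ≫ s' = s ≫ f' := by
  induction hs with
  | of s hs =>
      intro Y f
      obtain ⟨Y', f', s', hs', eq⟩ := ore_single S s hs f
      exact ⟨Y', f', s', MClos.of s' hs', eq⟩
  | id X => exact fun Y f => ⟨Y, f, 𝟙 Y, MClos.id Y, by simp⟩
  | comp s₁ s₂ h₁ h₂ ih₁ ih₂ =>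
      intro Y f
      obtain ⟨Y₁, f₁, t₁, ht₁, e₁⟩ := ih₁ f
      obtain ⟨Y₂, f₂, t₂, ht₂, e₂⟩ := ih₂ f₁
      refine ⟨Y₂, f₂, t₁ ≫ t₂, MClos.comp t₁ t₂ ht₁ ht₂, ?_⟩
      rw [← Category.assoc, e₁, Category.assoc, e₂, ← Category.assoc]

lemma ext_single {X' X Y : C} (f₁ f₂ : X ⟶ Y) (s : X' ⟶ X) (hs : S.W s)
    (h : s ≫ f₁ = s ≫ f₂) :
    ∃ (Y' : C) (t : Y ⟶ Y') (_ : S.W t), f₁ ≫ t = f₂ ≫ t := by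
  obtain ⟨Z, g, hh, H, mem⟩ := hs
  have hf₂ : s ≫ (f₁ - f₂) = 0 := by rw [Preadditive.comp_sub, h, sub_self]
  obtain ⟨q, hq⟩ := Triangle.yoneda_exact₂ _ H _ hf₂
  obtain ⟨Y', r, t, mem'⟩ := distinguished_cocone_triangle q
  refine ⟨Y', r, ?_, ?_⟩
  · exact ⟨_, _, _, rot_of_distTriang _ mem', S.shift _ _ mem⟩
  · have eq := comp_distTriang_mor_zero₁₂ _ mem'
    dsimp at eq
    rw [← sub_eq_zero, ← Preadditive.sub_comp, hq]
    exact (Category.assoc _ _ _).trans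
      ((congrArg (fun x => (Triangle.mk s g hh).mor₂ ≫ x) eq).trans comp_zero)

lemma ext_mclos {X' X : C} {s : X' ⟶ X} (hs : MClos S s) :
    ∀ ⦃Y : C⦄ (f₁ f₂ : X ⟶ Y), s ≫ f₁ = s ≫ f₂ →
      ∃ (Y' : C) (t : Y ⟶ Y') (_ : MClos S t), f₁ ≫ t = f₂ ≫ t := by
  induction hs with
  | of s hs =>
      intro Y f₁ f₂ h
      obtain ⟨Y', t, ht, eq⟩ := ext_single S f₁ f₂ s hs h
      exact ⟨Y', t, MClos.of t ht, eq⟩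
  | id X =>
      intro Y f₁ f₂ h
      simp only [Category.id_comp] at h
      exact ⟨Y, 𝟙 Y, MClos.id Y, by rw [h]⟩
  | comp s₁ s₂ h₁ h₂ ih₁ ih₂ =>
      intro Y f₁ f₂ h
      rw [Category.assoc, Category.assoc] at h
      obtain ⟨Y₁, t₁, ht₁, e₁⟩ := ih₁ (s₂ ≫ f₁) (s₂ ≫ f₂) h
      rw [Category.assoc, Category.assoc] at e₁
      obtain ⟨Y₂, t₂, ht₂, e₂⟩ := ih₂ (f₁ ≫ t₁) (f₂ ≫ t₁) e₁
      exact ⟨Y₂, t₁ ≫ t₂, MClos.comp t₁ t₂ ht₁ ht₂,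
        by rw [← Category.assoc, ← Category.assoc]; exact e₂⟩

instance : (MP S).HasLeftCalculusOfFractions where
  exists_leftFraction X Y φ := by
    obtain ⟨Y', f', s', hs', eq⟩ := ore_mclos S φ.hs φ.f
    exact ⟨MorphismProperty.LeftFraction.mk f' s' hs', eq⟩
  ext X' X Y f₁ f₂ s hs h := by
    obtain ⟨Y', t, ht, eq⟩ := ext_mclos S hs f₁ f₂ h
    exact ⟨Y', t, ht, eq⟩

end Fractions

section Retract

variable (ρ : RankFunction C)

lemma rank_snd_zeroLeft (N A : C) :
    ρ.rank (biprod.snd : N ⊞ A ⟶ A) = ρ.rank (𝟙 A) := by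
  have hz : IsIso (biprod.snd : (0 : C) ⊞ A ⟶ A) := by
    refine ⟨biprod.inr, ?_, by simp⟩
    apply biprod.hom_ext'
    · exact (Limits.isZero_zero C).eq_of_src _ _
    · simp
  have he : (biprod.map (0 : N ⟶ (0 : C)) (𝟙 A)) ≫ (biprod.snd : (0 : C) ⊞ A ⟶ A)
      = (biprod.snd : N ⊞ A ⟶ A) := by simp
  rw [← he, ρ.rank_postcomp_iso, ρ.additive]
  have h1 : ρ.rank (0 : N ⟶ (0 : C)) ≤ ρ.rank (𝟙 (0 : C)) := ρ.rank_le_tgt _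
  have h2 := ρ.nonneg (0 : N ⟶ (0 : C))
  have h3 := ρ.rank_id_zeroObj
  linarith

lemma rank_fst_comp (N A B : C) (b : N ⟶ B) :
    ρ.rank ((biprod.fst : N ⊞ A ⟶ N) ≫ b) = ρ.rank b := by
  have hinl : IsIso (biprod.inl : B ⟶ B ⊞ (0 : C)) := by
    refine ⟨biprod.fst, by simp, ?_⟩
    apply biprod.hom_ext
    · simp
    · exact (Limits.isZero_zero C).eq_of_tgt _ _
  have he : ((biprod.fst : N ⊞ A ⟶ N) ≫ b) ≫ (biprod.inl : B ⟶ B ⊞ (0 : C))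
      = biprod.map b (0 : A ⟶ (0 : C)) := by
    apply biprod.hom_ext
    · simp
    · exact (Limits.isZero_zero C).eq_of_tgt _ _
  rw [← ρ.rank_postcomp_iso ((biprod.fst : N ⊞ A ⟶ N) ≫ b) (biprod.inl : B ⟶ B ⊞ (0 : C)),
    he, ρ.additive]
  have h1 : ρ.rank (0 : A ⟶ (0 : C)) ≤ ρ.rank (𝟙 (0 : C)) := ρ.rank_le_tgt _
  have h2 := ρ.nonneg (0 : A ⟶ (0 : C))
  have h3 := ρ.rank_id_zeroObj
  linarith

lemma rank_id_le_of_retract {A N : C} (a : A ⟶ N) (b : N ⟶ A) (hab : a ≫ b = 𝟙 A) :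
    ρ.rank (𝟙 A) ≤ ρ.rank (𝟙 N) := by
  have hθ'' : IsIso (biprod.desc (biprod.inl + b ≫ biprod.inr) biprod.inr :
      N ⊞ A ⟶ N ⊞ A) := by
    refine ⟨biprod.desc (biprod.inl - b ≫ biprod.inr) biprod.inr, ?_, ?_⟩ <;>
      apply biprod.hom_ext' <;> simp
  have hθ' : IsIso (biprod.desc biprod.inl (a ≫ biprod.inl + biprod.inr) :
      N ⊞ A ⟶ N ⊞ A) := by
    refine ⟨biprod.desc biprod.inl (-(a ≫ biprod.inl) + biprod.inr), ?_, ?_⟩ <;>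
      apply biprod.hom_ext' <;> simp
  have e1 : (biprod.desc b (𝟙 A) : N ⊞ A ⟶ A)
      = (biprod.desc (biprod.inl + b ≫ biprod.inr) biprod.inr : N ⊞ A ⟶ N ⊞ A)
        ≫ biprod.snd := by
    apply biprod.hom_ext' <;> simp
  have e2 : (biprod.desc b (𝟙 A) : N ⊞ A ⟶ A)
      = (biprod.desc biprod.inl (a ≫ biprod.inl + biprod.inr) : N ⊞ A ⟶ N ⊞ A)
        ≫ (biprod.fst ≫ b) := by
    apply biprod.hom_ext' <;> simp [hab]
  have h1 : ρ.rank (biprod.desc b (𝟙 A) : N ⊞ A ⟶ A) = ρ.rank (𝟙 A) := by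
    rw [e1, ρ.rank_precomp_iso, rank_snd_zeroLeft]
  have h2 : ρ.rank (biprod.desc b (𝟙 A) : N ⊞ A ⟶ A) = ρ.rank b := by
    rw [e2, ρ.rank_precomp_iso, rank_fst_comp]
  have h3 : ρ.rank b ≤ ρ.rank (𝟙 N) := ρ.rank_le_src b
  linarith

end Retract

section Localization

variable (S : Triangulated.Subcategory C)

lemma mclos_isInvertedBy {E : Type*} [Category E] (F : C ⥤ E)
    (hF : S.W.IsInvertedBy F) : (MP S).IsInvertedBy F := by
  intro X Y f hf
  induction hf with
  | of f hf => exact hF _ hf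
  | id X => rw [CategoryTheory.Functor.map_id]; infer_instance
  | comp f g hf hg ihf ihg =>
      rw [Functor.map_comp]
      exact @IsIso.comp_isIso _ _ _ _ _ _ _ ihf ihg

/-- The strict universal property: `(MP S).Q` is also a localization for `S.W`. -/
noncomputable def supQ (E : Type*) [Category E] :
    Localization.StrictUniversalPropertyFixedTarget (MP S).Q S.W E where
  inverts _ _ f hf := (MP S).Q_inverts _ (MClos.of f hf)
  lift F hF := Localization.Construction.lift F (mclos_isInvertedBy S F hF)
  fac F hF := Localization.Construction.fac _ _
  uniq F₁ F₂ h := Localization.Construction.uniq _ _ h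

variable {D : Type u'} [Category.{v'} D] (κ : C ⥤ D) [κ.IsLocalization S.W]

lemma isLocalization_MP : κ.IsLocalization (MP S) := by
  haveI : (MP S).Q.IsLocalization S.W :=
    Functor.IsLocalization.mk' _ _ (supQ S _) (supQ S _)
  exact Functor.IsLocalization.of_equivalence_target (MP S).Q (MP S) κ
    (Localization.uniq (MP S).Q κ S.W) (Localization.compUniqFunctor (MP S).Q κ S.W)

end Localization

section Main

variable (S : Triangulated.Subcategory C)
variable {D : Type u'} [Category.{v'} D] [Preadditive D] [HasZeroObject D] [HasShift D ℤ]
  [∀ n : ℤ, (shiftFunctor D n).Additive] [Pretriangulated D]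
  (κ : C ⥤ D) [κ.CommShift ℤ] [κ.IsTriangulated] [κ.IsLocalization S.W]
variable {ρ : RankFunction C} (hS : ∀ X : C, S.P X ↔ ρ.rank (𝟙 X) = 0)

include hS

/-- Fact A : morphisms killed by the localization functor factor through
rank-zero objects. -/
lemma factA {X Y : C} (f : X ⟶ Y) (hf : κ.map f = 0) : Ifac ρ f := by
  haveI := isLocalization_MP S κ
  have h0 : κ.map f = κ.map (0 : X ⟶ Y) := by rw [hf, Functor.map_zero]
  rw [MorphismProperty.map_eq_iff_postcomp κ (MP S) f (0 : X ⟶ Y)] at h0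
  obtain ⟨Z, s, hs, fac⟩ := h0
  rw [zero_comp] at fac
  exact ifac_of_mclos_zero hS hs f fac

lemma rank_id_zero_of_isZero (A : C) (h : IsZero (κ.obj A)) : ρ.rank (𝟙 A) = 0 := by
  have hid : κ.map (𝟙 A) = 0 := by
    rw [CategoryTheory.Functor.map_id]
    exact h.eq_of_src _ _
  obtain ⟨K, a, b, hK, hab⟩ := factA S κ hS (𝟙 A) hid
  have h1 := rank_id_le_of_retract ρ a b hab.symm
  have h2 := ρ.nonneg (𝟙 A)
  linarith

lemma rank_id_eq_of_isIso_map {A B : C} (φ : A ⟶ B) (h : IsIso (κ.map φ)) :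
    ρ.rank (𝟙 A) = ρ.rank (𝟙 B) := by
  obtain ⟨Z, g, hh, hT⟩ := distinguished_cocone_triangle φ
  have hD := κ.map_distinguished _ hT
  have hz : IsZero ((κ.mapTriangle.obj (Triangle.mk φ g hh)).obj₃) :=
    Triangle.isZero₃_of_isIso₁ _ hD h
  have hZ : ρ.rank (𝟙 Z) = 0 := rank_id_zero_of_isZero S κ hS Z hz
  have := ρ.rank_ends_eq_of_zero₃ _ hT (by dsimp; exact hZ)
  dsimp at this
  exact this

lemma rank_id_eq_of_iso_obj {A B : C} (e : κ.obj A ≅ κ.obj B) :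
    ρ.rank (𝟙 A) = ρ.rank (𝟙 B) := by
  haveI := isLocalization_MP S κ
  obtain ⟨φ, hφ⟩ := Localization.exists_leftFraction κ (MP S) e.hom
  have h1 := MorphismProperty.LeftFraction.map_comp_map_s φ κ (Localization.inverts κ (MP S))
  haveI hs : IsIso (κ.map φ.s) := Localization.inverts κ (MP S) _ φ.hs
  have hf : IsIso (κ.map φ.f) := by
    rw [← h1, ← hφ]
    infer_instance
  rw [rank_id_eq_of_isIso_map S κ hS φ.f hf, rank_id_eq_of_isIso_map S κ hS φ.s hs]

/-- direction `κ f = 0 → ρ f = 0`. -/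
lemma rank_zero_of_map_zero {X Y : C} (f : X ⟶ Y) (hf : κ.map f = 0) :
    ρ.rank f = 0 := by
  obtain ⟨Z, g, h, hT⟩ := distinguished_cocone_triangle f
  -- the split triangle  X⟦1⟧⟦-1⟧ ⟶ Y ⟶ Y ⊞ X⟦1⟧
  have hT₂ := inv_rot_of_distTriang _ (binaryBiproductTriangle_distinguished Y (X⟦(1 : ℤ)⟧))
  have hmor : (binaryBiproductTriangle Y (X⟦(1 : ℤ)⟧)).invRotate.mor₁ = 0 := by
    dsimp [Triangle.invRotate, binaryBiproductTriangle]
    simp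
    rfl
  have hD₁ := κ.map_distinguished _ hT
  have hD₂ := κ.map_distinguished _ hT₂
  have harr : Arrow.mk ((κ.mapTriangle.obj (Triangle.mk f g h)).mor₁) ≅
      Arrow.mk ((κ.mapTriangle.obj
        (binaryBiproductTriangle Y (X⟦(1 : ℤ)⟧)).invRotate).mor₁) := by
    refine Arrow.isoMk (κ.mapIso ((shiftEquiv C (1 : ℤ)).unitIso.app X)) (Iso.refl _) ?_
    change _ ≫ κ.map (binaryBiproductTriangle Y (X⟦(1 : ℤ)⟧)).invRotate.mor₁ = κ.map f ≫ _
    rw [hmor, hf, Functor.map_zero]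
    exact comp_zero.trans zero_comp.symm
  obtain ⟨e, -, -⟩ := exists_iso_of_arrow_iso _ _ hD₁ hD₂ harr
  have hobj : ρ.rank (𝟙 Z) = ρ.rank (𝟙 (Y ⊞ X⟦(1 : ℤ)⟧)) :=
    rank_id_eq_of_iso_obj S κ hS (Triangle.π₃.mapIso e)
  have h1 := ρ.rank_cone_id _ hT
  dsimp at h1
  rw [ρ.rank_id_biprod, ρ.rank_id_shift_s13] at hobj
  have h2 := ρ.nonneg f
  linarith

/-- direction  factorization → `κ f = 0`. -/
lemma map_zero_of_ifac {X Y : C} (f : X ⟶ Y) (hf : Ifac ρ f) : κ.map f = 0 := by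
  obtain ⟨K, g, g', hK, rfl⟩ := hf
  -- (0 : K ⟶ 0) is in S.W
  have hT : Triangle.mk (0 : K ⟶ (0 : C)) (0 : (0 : C) ⟶ K⟦(1 : ℤ)⟧)
      (-(𝟙 K)⟦(1 : ℤ)⟧') ∈ distTriang C := by
    refine isomorphic_distinguished _
      (rot_of_distTriang _ (contractible_distinguished K)) _ ?_
    exact Triangle.isoMk _ _ (Iso.refl _) (Iso.refl _) (Iso.refl _)
      (by dsimp; simp; exact zero_comp.trans comp_zero.symm)
      (by dsimp; simp; exact zero_comp.trans zero_comp.symm)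
      (by dsimp; simp [contractibleTriangle]; rfl)
  have hW : S.W (0 : K ⟶ (0 : C)) := by
    refine ⟨K⟦(1 : ℤ)⟧, _, _, hT, ?_⟩
    exact (hS _).mpr (by rw [ρ.rank_id_shift_s13]; exact hK)
  haveI := Localization.inverts κ S.W _ hW
  have hz0 : IsZero (κ.obj (0 : C)) := κ.map_isZero (Limits.isZero_zero C)
  have hzK : IsZero (κ.obj K) := hz0.of_iso (asIso (κ.map (0 : K ⟶ (0 : C))))
  rw [Functor.map_comp]
  have : κ.map g' = 0 := hzK.eq_of_src _ _
  rw [this, comp_zero]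

end Main

end Stmt13

theorem localising_iff_kernel_of_verdier_localisation
    (ρ : RankFunction C) (hint : ρ.Integral)
    -- the thick subcategory `Ker ρ_ob`
    (S : Triangulated.Subcategory C) (hS : ∀ X : C, S.P X ↔ ρ.rank (𝟙 X) = 0)
    -- the Verdier localisation `κ : C ⥤ D` at `Ker ρ_ob`
    {D : Type u'} [Category.{v'} D] [Preadditive D] [HasZeroObject D] [HasShift D ℤ]
    [∀ n : ℤ, (shiftFunctor D n).Additive] [Pretriangulated D]
    (κ : C ⥤ D) [κ.CommShift ℤ] [κ.IsTriangulated] [κ.IsLocalization S.W] :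
    -- `ρ` is localising (integrality being assumed) iff `Ker (κ*|mod C) = Ker ρ̃`,
    -- i.e. (via Yoneda) iff vanishing of `ρ` on a morphism is the same as the morphism
    -- being killed by `κ`:
    (∀ ⦃X Y : C⦄ (f : X ⟶ Y), ρ.rank f = 0 →
      ∃ (K : C) (g : X ⟶ K) (g' : K ⟶ Y), ρ.rank (𝟙 K) = 0 ∧ f = g ≫ g') ↔
    (∀ ⦃X Y : C⦄ (f : X ⟶ Y), ρ.rank f = 0 ↔ κ.map f = 0) := by
  constructor
  · intro hloc X Y f
    constructor
    · intro hρ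
      obtain ⟨K, g, g', hK, rfl⟩ := hloc f hρ
      exact Stmt13.map_zero_of_ifac S κ hS _ ⟨K, g, g', hK, rfl⟩
    · intro hκ
      exact Stmt13.rank_zero_of_map_zero S κ hS f hκ
  · intro hiff X Y f hρ
    exact Stmt13.factA S κ hS f ((hiff f).mp hρ)
end

section
/- Let Z be a module over a ring R with translation-invariant partial order, let q ∈ R with q+1 Z-regular, and let C be a skeletally small triangulated category. If ρ_ob is a Z-valued q-rank function on objects of C, then the assignment ρ(f) := z_f, where z_f ∈ Z_{≥0} is the unique element with (q+1)z_f = ρ_ob(Y) − ρ_ob(Cone f) + ρ_ob(ΣX) for f : X → Y, defines a Z-valued q-rank function on morphisms: it is q-Σ-invariant, additive on direct sums, and satisfies ρ(f) + ρ(g) = ρ(1_Y) for every triangle X →f Y →g Z → ΣX. -/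
/-!
Statement 18: Let `Z` be a module over a ring `R` with a translation-invariant partial
order, `q ∈ R` with `q + 1` `Z`-regular, and `C` a skeletally small triangulated category.
If `ρ_ob` is a `Z`-valued `q`-rank function on objects, then `ρ(f) := z_f`, where `z_f` is
the unique non-negative element with `(q+1) • z_f = ρ_ob(Y) - ρ_ob(Cone f) + ρ_ob(ΣX)`,
defines a `Z`-valued `q`-rank function on morphisms: non-negative, `q`-Σ-invariant,
additive on direct sums, and satisfying rank-nullity on distinguished triangles.
-/

open CategoryTheory CategoryTheory.Limits CategoryTheory.Pretriangulated

universe v u w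

open ZeroObject

section Aux

variable {C : Type u} [Category.{v} C] [Preadditive C] [HasZeroObject C] [HasShift C ℤ]
  [∀ n : ℤ, (shiftFunctor C n).Additive] [Pretriangulated C]

/-- A triangle `A ≅ B → 0` on an isomorphism is distinguished. -/
lemma aux_dist₁ {A B : C} (e : A ≅ B) {D : C} (hD : IsZero D) :
    Triangle.mk e.hom (0 : B ⟶ D) (0 : D ⟶ A⟦(1:ℤ)⟧) ∈ distTriang C := by
  refine isomorphic_distinguished _ (contractible_distinguished A) _ ?_
  exact Triangle.isoMk _ _ (Iso.refl A) e.symm hD.isoZero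
    (by show e.hom ≫ e.inv = 𝟙 A ≫ 𝟙 A; simp)
    (by show (0 : B ⟶ D) ≫ hD.isoZero.hom = e.inv ≫ (0 : A ⟶ 0); simp)
    (by show (0 : D ⟶ A⟦(1:ℤ)⟧) ≫ (shiftFunctor C (1:ℤ)).map (𝟙 A) = hD.isoZero.hom ≫ (0 : (0:C) ⟶ A⟦(1:ℤ)⟧); simp)

lemma aux_isZero_shift {X : C} (hX : IsZero X) (n : ℤ) :
    IsZero ((shiftFunctor C n).obj X) := by
  rw [IsZero.iff_id_eq_zero] at hX ⊢
  rw [← (shiftFunctor C n).map_id, hX, Functor.map_zero]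

/-- A triangle `0 → A ≅ B` on an isomorphism is distinguished. -/
lemma aux_dist₂ {A B : C} (e : A ≅ B) {D : C} (hD : IsZero D) :
    Triangle.mk (0 : D ⟶ A) e.hom (0 : B ⟶ D⟦(1:ℤ)⟧) ∈ distTriang C := by
  have h0 : Triangle.mk e.hom (0 : B ⟶ D⟦(1:ℤ)⟧) (0 : D⟦(1:ℤ)⟧ ⟶ A⟦(1:ℤ)⟧) ∈ distTriang C :=
    aux_dist₁ e (aux_isZero_shift hD 1)
  refine isomorphic_distinguished _ (inv_rot_of_distTriang _ h0) _ ?_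
  refine Triangle.isoMk _ _
    (hD.iso (aux_isZero_shift (aux_isZero_shift hD 1) (-1))) (Iso.refl _) (Iso.refl _)
    (hD.eq_of_src _ _) (by show e.hom ≫ 𝟙 B = 𝟙 A ≫ e.hom; simp) ?_
  apply (aux_isZero_shift (aux_isZero_shift (aux_isZero_shift hD 1) (-1)) 1).eq_of_tgt

/-- Negating `mor₁` and `mor₃` of a distinguished triangle gives a distinguished triangle. -/
lemma aux_dist_neg (T : Triangle C) (hT : T ∈ distTriang C) :
    Triangle.mk (-T.mor₁) T.mor₂ (-T.mor₃) ∈ distTriang C := by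
  refine isomorphic_distinguished _ hT _ ?_
  refine Triangle.isoMk _ _ (show T.obj₁ ≅ T.obj₁ from ⟨-𝟙 _, -𝟙 _, by simp, by simp⟩) (Iso.refl _) (Iso.refl _)
    (by show (-T.mor₁) ≫ 𝟙 T.obj₂ = (-𝟙 T.obj₁) ≫ T.mor₁; simp)
    (by show T.mor₂ ≫ 𝟙 T.obj₃ = 𝟙 T.obj₂ ≫ T.mor₂; simp) ?_
  show (-T.mor₃) ≫ (shiftFunctor C (1:ℤ)).map (-𝟙 T.obj₁) = 𝟙 T.obj₃ ≫ T.mor₃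
  rw [Functor.map_neg, (shiftFunctor C (1:ℤ)).map_id]
  simp

/-- The biproduct of two objects is isomorphic to the product of the corresponding
`WalkingPair`-indexed family. -/
@[simps]
noncomputable def auxBiprodPiIso {C : Type u} [Category.{v} C] [HasZeroMorphisms C]
    (F : WalkingPair → C) [HasProduct F]
    [HasBinaryBiproduct (F WalkingPair.left) (F WalkingPair.right)] :
    (F WalkingPair.left) ⊞ (F WalkingPair.right) ≅ ∏ᶜ F where
  hom := Pi.lift (fun j => match j with
    | WalkingPair.left => biprod.fst
    | WalkingPair.right => biprod.snd)
  inv := biprod.lift (Pi.π F WalkingPair.left) (Pi.π F WalkingPair.right)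
  hom_inv_id := by apply biprod.hom_ext <;> simp
  inv_hom_id := by
    apply Pi.hom_ext
    intro j
    cases j <;> simp

end Aux

theorem q_rank_function_on_objects_induces_q_rank_function_on_morphisms
    {C : Type u} [Category.{v} C] [Preadditive C] [HasZeroObject C] [HasShift C ℤ]
    [∀ n : ℤ, (shiftFunctor C n).Additive] [Pretriangulated C] [HasBinaryBiproducts C]
    [EssentiallySmall.{v} C]
    {R : Type w} [Ring R] {Z : Type w} [AddCommGroup Z] [Module R Z]
    [PartialOrder Z] [CovariantClass Z Z (· + ·) (· ≤ ·)]
    (q : R)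
    -- `q + 1` is `Z`-regular:
    (hreg : Function.Injective fun z : Z => (q + 1) • z)
    (ρob : C → Z)
    -- (O1) non-negativity:
    (h1 : ∀ X : C, 0 ≤ ρob X)
    -- (O2) additivity:
    (h2 : ∀ X Y : C, ρob (X ⊞ Y) = ρob X + ρob Y)
    -- (O3q) congruence:
    (h3 : ∀ (T : Triangle C), (T ∈ distTriang C) → ∃ z : Z, 0 ≤ z ∧
      ρob T.obj₂ - ρob T.obj₃ + ρob ((shiftFunctor C (1 : ℤ)).obj T.obj₁) = (q + 1) • z)
    -- (O4q) `q`-Σ-invariance: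
    (h4 : ∀ X : C, ρob ((shiftFunctor C (1 : ℤ)).obj X) = q • ρob X) :
    ∃ ρ : ∀ ⦃X Y : C⦄, (X ⟶ Y) → Z,
      -- defining property: `(q+1) • ρ(f) = ρ_ob(Y) - ρ_ob(Cone f) + ρ_ob(ΣX)`
      (∀ (T : Triangle C), (T ∈ distTriang C) →
        (q + 1) • ρ T.mor₁ =
          ρob T.obj₂ - ρob T.obj₃ + ρob ((shiftFunctor C (1 : ℤ)).obj T.obj₁)) ∧
      -- (M1) non-negativity:
      (∀ ⦃X Y : C⦄ (f : X ⟶ Y), 0 ≤ ρ f) ∧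
      -- (M2) additivity:
      (∀ ⦃X₁ Y₁ X₂ Y₂ : C⦄ (f : X₁ ⟶ Y₁) (g : X₂ ⟶ Y₂),
        ρ (biprod.map f g) = ρ f + ρ g) ∧
      -- (M3) rank-nullity:
      (∀ (T : Triangle C), (T ∈ distTriang C) →
        ρ T.mor₁ + ρ T.mor₂ = ρ (𝟙 T.obj₂)) ∧
      -- (M4q) `q`-Σ-invariance:
      (∀ ⦃X Y : C⦄ (f : X ⟶ Y), ρ ((shiftFunctor C (1 : ℤ)).map f) = q • ρ f) := by
  classical
  have hinj : ∀ {x y : Z}, (q + 1) • x = (q + 1) • y → x = y := fun h => hreg h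
  -- `IsZero` is stable under biproducts
  have hbiprodZero : ∀ {X Y : C}, IsZero X → IsZero Y → IsZero (X ⊞ Y) := by
    intro X Y hX hY
    rw [IsZero.iff_id_eq_zero]
    apply biprod.hom_ext
    · exact hX.eq_of_tgt _ _
    · exact hY.eq_of_tgt _ _
  -- The basic engine: for any iso `e : A ≅ B` and zero object `D`,
  -- `ρob B - ρob D + q • ρob A` is `(q+1)` times a non-negative element.
  have E : ∀ {A B : C} (_ : A ≅ B) (D : C), IsZero D →
      ∃ z : Z, 0 ≤ z ∧ ρob B - ρob D + q • ρob A = (q + 1) • z := by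
    intro A B e D hD
    obtain ⟨z, hz0, hz⟩ := h3 _ (aux_dist₁ e hD)
    refine ⟨z, hz0, ?_⟩
    rw [← h4 A]
    simpa using hz
  -- Step 1: `ρob 0 = 0`.
  have hzero : ρob (0 : C) = 0 := by
    have hZ0 : IsZero (0 : C) := isZero_zero C
    have hZ1 : IsZero ((0 : C)⟦(1:ℤ)⟧) := aux_isZero_shift hZ0 1
    have hZ2 : IsZero ((0 : C) ⊞ ((0:C) ⊞ (0:C))) := hbiprodZero hZ0 (hbiprodZero hZ0 hZ0)
    have hZ3 : IsZero (((0:C) ⊞ (0:C))⟦(1:ℤ)⟧) := aux_isZero_shift (hbiprodZero hZ0 hZ0) 1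
    -- r = (q+1) • s
    obtain ⟨s, hs0, hs⟩ := E (Iso.refl (0 : C)) ((0 : C)⟦(1:ℤ)⟧) hZ1
    rw [h4] at hs
    have hrs : ρob (0 : C) = (q + 1) • s := by
      rw [← hs]; abel
    -- z₃ : coefficient q - 2
    obtain ⟨z₃, hz₃0, hz₃⟩ := E (Iso.refl (0 : C)) ((0 : C) ⊞ ((0:C) ⊞ (0:C))) hZ2
    rw [h2, h2] at hz₃
    -- z₄ : coefficient 1 - q
    obtain ⟨z₄, hz₄0, hz₄⟩ := E (Iso.refl (0 : C)) (((0:C) ⊞ (0:C))⟦(1:ℤ)⟧) hZ3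
    rw [h4, h2] at hz₄
    -- (q+1) • (z₃ + z₄) = -ρob 0 = (q+1) • (-s)
    have hsum : (q + 1) • (z₃ + z₄) = (q + 1) • (-s) := by
      rw [smul_add, ← hz₃, ← hz₄, smul_neg, ← hrs, smul_add]
      abel
    have h34 : z₃ + z₄ = -s := hinj hsum
    have hs_le : s ≤ 0 := by
      have : (0 : Z) ≤ -s := h34 ▸ add_nonneg hz₃0 hz₄0
      simpa using this
    have : s = 0 := le_antisymm hs_le hs0
    rw [hrs, this, smul_zero]
  -- Step 2: `ρob D = 0` for every zero object `D`.
  have ρzero : ∀ {D : C}, IsZero D → ρob D = 0 := by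
    intro D hD
    obtain ⟨z₅, hz₅0, hz₅⟩ := E (Iso.refl (0 : C)) D hD
    obtain ⟨z₆, hz₆0, hz₆⟩ := E ((isZero_zero C).iso hD) (0 : C) (isZero_zero C)
    rw [hzero, smul_zero, zero_sub, add_zero] at hz₅
    rw [hzero, smul_zero, sub_zero, add_zero] at hz₆
    -- -ρob D = (q+1) z₅, ρob D = (q+1) z₆
    have hsum : (q + 1) • (z₅ + z₆) = (q + 1) • (0 : Z) := by
      rw [smul_add, ← hz₅, ← hz₆, smul_zero]
      abel
    have h56 : z₅ + z₆ = 0 := hinj hsum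
    have hz₆le : z₆ ≤ 0 := by
      calc z₆ = 0 + z₆ := (zero_add _).symm
        _ ≤ z₅ + z₆ := by exact add_le_add_left hz₅0 z₆
        _ = 0 := h56
    rw [hz₆, le_antisymm hz₆le hz₆0, smul_zero]
  -- Step 3: `ρob` is invariant under isomorphism.
  have ρiso : ∀ {A B : C}, (A ≅ B) → ρob A = ρob B := by
    have E2 : ∀ {A B : C}, (A ≅ B) → ∃ z : Z, 0 ≤ z ∧ ρob A - ρob B = (q + 1) • z := by
      intro A B e
      obtain ⟨z, hz0, hz⟩ := h3 _ (aux_dist₂ e (isZero_zero C))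
      refine ⟨z, hz0, ?_⟩
      have : ρob (((0 : C))⟦(1:ℤ)⟧) = 0 := ρzero (aux_isZero_shift (isZero_zero C) 1)
      simpa [this] using hz
    intro A B e
    obtain ⟨z, hz0, hz⟩ := E2 e
    obtain ⟨z', hz'0, hz'⟩ := E2 e.symm
    have hsum : (q + 1) • (z + z') = (q + 1) • (0 : Z) := by
      rw [smul_add, ← hz, ← hz', smul_zero]
      abel
    have hzz' : z + z' = 0 := hinj hsum
    have hzle : z ≤ 0 := by
      calc z = z + 0 := (add_zero _).symm
        _ ≤ z + z' := add_le_add_right hz'0 z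
        _ = 0 := hzz'
    have : z = 0 := le_antisymm hzle hz0
    rw [this, smul_zero, sub_eq_zero] at hz
    exact hz
  -- Step 4: choose cones and define ρ.
  have hcone : ∀ (X Y : C) (f : X ⟶ Y), ∃ (W : C) (g : Y ⟶ W) (h : W ⟶ X⟦(1:ℤ)⟧),
      Triangle.mk f g h ∈ distTriang C := fun _ _ f => distinguished_cocone_triangle f
  choose W g0 h0 hWdist using hcone
  have hz' : ∀ (X Y : C) (f : X ⟶ Y), ∃ z : Z, 0 ≤ z ∧
      ρob Y - ρob (W X Y f) + ρob (X⟦(1:ℤ)⟧) = (q + 1) • z := by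
    intro X Y f
    obtain ⟨z, hz0, hz⟩ := h3 _ (hWdist X Y f)
    exact ⟨z, hz0, by simpa using hz⟩
  choose ρ0 hρ0 hρeq using hz'
  -- the defining property for every distinguished triangle
  have hmain : ∀ (T : Triangle C), (T ∈ distTriang C) →
      (q + 1) • ρ0 _ _ T.mor₁ =
        ρob T.obj₂ - ρob T.obj₃ + ρob ((shiftFunctor C (1 : ℤ)).obj T.obj₁) := by
    intro T hT
    have e : Triangle.mk T.mor₁ (g0 _ _ T.mor₁) (h0 _ _ T.mor₁) ≅ T :=
      isoTriangleOfIso₁₂ _ _ (hWdist _ _ T.mor₁) hT (Iso.refl _) (Iso.refl _)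
        (by show T.mor₁ ≫ 𝟙 T.obj₂ = 𝟙 T.obj₁ ≫ T.mor₁; simp)
    have e3 : W _ _ T.mor₁ ≅ T.obj₃ := Triangle.π₃.mapIso e
    have h5 := hρeq _ _ T.mor₁
    rw [ρiso e3] at h5
    exact h5.symm
  refine ⟨fun X Y f => ρ0 X Y f, hmain, fun X Y f => hρ0 X Y f, ?_, ?_, ?_⟩
  · -- (M2) additivity
    intro X₁ Y₁ X₂ Y₂ f g
    apply hinj
    beta_reduce
    let T₁ : Triangle C := Triangle.mk f (g0 _ _ f) (h0 _ _ f)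
    let T₂ : Triangle C := Triangle.mk g (g0 _ _ g) (h0 _ _ g)
    let Tp : WalkingPair → Triangle C := fun j => WalkingPair.casesOn j T₁ T₂
    have hTp : ∀ j, Tp j ∈ distTriang C := by
      rintro (_ | _)
      · exact hWdist _ _ f
      · exact hWdist _ _ g
    have hP := productTriangle_distinguished Tp hTp
    let e₁ : X₁ ⊞ X₂ ≅ ∏ᶜ (fun j => (Tp j).obj₁) := auxBiprodPiIso (fun j => (Tp j).obj₁)
    let e₂ : Y₁ ⊞ Y₂ ≅ ∏ᶜ (fun j => (Tp j).obj₂) := auxBiprodPiIso (fun j => (Tp j).obj₂)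
    have sq1 : biprod.map f g ≫ e₂.hom = e₁.hom ≫ (productTriangle Tp).mor₁ := by
      apply Pi.hom_ext
      intro j
      cases j
      · have a1 : e₂.hom ≫ Pi.π (fun j => (Tp j).obj₂) WalkingPair.left = biprod.fst := Pi.lift_π _ _
        have a2 : (productTriangle Tp).mor₁ ≫ Pi.π (fun j => (Tp j).obj₂) WalkingPair.left =
            Pi.π (fun j => (Tp j).obj₁) WalkingPair.left ≫ f :=
              Pi.map_π (fun j => (Tp j).mor₁) WalkingPair.left
        have a3 : e₁.hom ≫ Pi.π (fun j => (Tp j).obj₁) WalkingPair.left = biprod.fst := Pi.lift_π _ _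
        exact (Category.assoc _ _ _).trans ((congrArg (biprod.map f g ≫ ·) a1).trans
          ((biprod.map_fst f g).trans ((congrArg (· ≫ f) a3).symm.trans ((Category.assoc _ _ _).trans
            ((congrArg (e₁.hom ≫ ·) a2).symm.trans (Category.assoc _ _ _).symm)))))
      · have a1 : e₂.hom ≫ Pi.π (fun j => (Tp j).obj₂) WalkingPair.right = biprod.snd := Pi.lift_π _ _
        have a2 : (productTriangle Tp).mor₁ ≫ Pi.π (fun j => (Tp j).obj₂) WalkingPair.right =
            Pi.π (fun j => (Tp j).obj₁) WalkingPair.right ≫ g :=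
              Pi.map_π (fun j => (Tp j).mor₁) WalkingPair.right
        have a3 : e₁.hom ≫ Pi.π (fun j => (Tp j).obj₁) WalkingPair.right = biprod.snd := Pi.lift_π _ _
        exact (Category.assoc _ _ _).trans ((congrArg (biprod.map f g ≫ ·) a1).trans
          ((biprod.map_snd f g).trans ((congrArg (· ≫ g) a3).symm.trans ((Category.assoc _ _ _).trans
            ((congrArg (e₁.hom ≫ ·) a2).symm.trans (Category.assoc _ _ _).symm)))))
    have hTsum : Triangle.mk (biprod.map f g) (e₂.hom ≫ (productTriangle Tp).mor₂)
        ((productTriangle Tp).mor₃ ≫ (shiftFunctor C (1:ℤ)).map e₁.inv) ∈ distTriang C := by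
      refine isomorphic_distinguished _ hP _ ?_
      refine Triangle.isoMk _ _ e₁ e₂ (Iso.refl _) sq1 (by exact Category.comp_id _) ?_
      show ((productTriangle Tp).mor₃ ≫ (shiftFunctor C (1:ℤ)).map e₁.inv) ≫
        (shiftFunctor C (1:ℤ)).map e₁.hom = 𝟙 (productTriangle Tp).obj₃ ≫ (productTriangle Tp).mor₃
      rw [Category.assoc]
      exact (congrArg ((productTriangle Tp).mor₃ ≫ ·) ((shiftFunctor C (1:ℤ)).mapIso e₁).inv_hom_id).trans
        ((Category.comp_id _).trans (Category.id_comp _).symm)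
    have hA := hmain _ hTsum
    change (q + 1) • ρ0 (X₁ ⊞ X₂) (Y₁ ⊞ Y₂) (biprod.map f g) = ρob (Y₁ ⊞ Y₂) -
      ρob (productTriangle Tp).obj₃ + ρob ((shiftFunctor C (1:ℤ)).obj (X₁ ⊞ X₂)) at hA
    have e3eq : ρob ((productTriangle Tp).obj₃) = ρob (W X₁ Y₁ f ⊞ W X₂ Y₂ g) :=
      (ρiso (auxBiprodPiIso (fun j => (Tp j).obj₃))).symm
    rw [e3eq] at hA
    rw [hA, smul_add, ← hρeq X₁ Y₁ f, ← hρeq X₂ Y₂ g]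
    simp only [h2, h4, smul_add]
    abel
  · -- (M3) rank-nullity
    intro T hT
    apply hinj
    have hA := hmain T hT
    have hB := hmain T.rotate (rot_of_distTriang T hT)
    have hC := hmain (contractibleTriangle T.obj₂) (contractible_distinguished T.obj₂)
    change (q + 1) • ρ0 T.obj₂ T.obj₃ T.mor₂ = ρob T.obj₃ - ρob ((shiftFunctor C (1:ℤ)).obj T.obj₁) +
      ρob ((shiftFunctor C (1:ℤ)).obj T.obj₂) at hB
    change (q + 1) • ρ0 T.obj₂ T.obj₂ (𝟙 T.obj₂) = ρob T.obj₂ - ρob 0 +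
      ρob ((shiftFunctor C (1:ℤ)).obj T.obj₂) at hC
    rw [ρzero (isZero_zero C)] at hC
    rw [smul_add, hA, hB, hC]
    abel
  · -- (M4q)
    intro X Y f
    apply hinj
    -- the triple rotation of the chosen triangle for `f`, with signs removed
    have hT3 := rot_of_distTriang _ (rot_of_distTriang _ (rot_of_distTriang _ (hWdist X Y f)))
    have hT4 := aux_dist_neg _ hT3
    change Triangle.mk (-(-(shiftFunctor C (1:ℤ)).map f)) (-(shiftFunctor C (1:ℤ)).map (g0 X Y f))
      (-(-(shiftFunctor C (1:ℤ)).map (h0 X Y f))) ∈ distTriang C at hT4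
    rw [neg_neg] at hT4
    have hA := hmain _ hT4
    have hB := hmain _ (hWdist X Y f)
    change (q + 1) • ρ0 ((shiftFunctor C (1:ℤ)).obj X) ((shiftFunctor C (1:ℤ)).obj Y)
      ((shiftFunctor C (1:ℤ)).map f) = ρob ((shiftFunctor C (1:ℤ)).obj Y) -
      ρob ((shiftFunctor C (1:ℤ)).obj (W X Y f)) +
      ρob ((shiftFunctor C (1:ℤ)).obj ((shiftFunctor C (1:ℤ)).obj X)) at hA
    change (q + 1) • ρ0 X Y f = ρob Y - ρob (W X Y f) + ρob ((shiftFunctor C (1:ℤ)).obj X) at hB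
    simp only [h4] at hA hB
    beta_reduce
    rw [hA]
    conv_rhs => rw [← mul_smul,
      show (q + 1) * q = q * (q + 1) from by rw [mul_add, add_mul, mul_one, one_mul],
      mul_smul, hB, smul_add, smul_sub]
end

section
/- Let T be a compactly generated triangulated category with C = T^c, and let ρ be a basic rank function on C with associated basic Σ-invariant endofinite object Z_ρ in T (so that ρ(1_X) = length over End_T(Z_ρ) of Hom_T(X, Z_ρ) for compact X). Then the kernel on morphisms of ρ satisfies Ker ρ = {f in C : Hom_T(f, Z_ρ) = 0}. -/
/-!
Statement 19: Let `T` be a compactly generated triangulated category with `C = T^c`, and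
let `ρ` be a basic rank function on `C` whose associated basic Σ-invariant endofinite
object is `Z_ρ` (so that `ρ(1_X)` is the composition length of `Hom_T(X, Z_ρ)` over
`End_T(Z_ρ)` for compact `X`). Then `Ker ρ = {f in C : Hom_T(f, Z_ρ) = 0}`, i.e. for a
morphism `f : X ⟶ Y` between compact objects, `ρ(f) = 0` iff precomposition with `f`
kills every morphism `Y ⟶ Z_ρ`.
-/

open CategoryTheory CategoryTheory.Limits CategoryTheory.Pretriangulated

universe v u

variable {T : Type u} [Category.{v} T] [Preadditive T] [HasZeroObject T] [HasShift T ℤ]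
  [∀ n : ℤ, (shiftFunctor T n).Additive] [Pretriangulated T] [HasBinaryBiproducts T]
  [HasCoproducts.{v} T]

/-- An object is compact if every morphism into a coproduct factors through a finite
subcoproduct (in a triangulated category with coproducts this is equivalent to
`Hom(X, -)` preserving coproducts). -/
def IsCompactObj (X : T) : Prop :=
  ∀ (ι : Type v) (Y : ι → T) (φ : X ⟶ ∐ Y),
    ∃ (s : Finset ι) (ψ : X ⟶ ∐ fun i : s => Y i),
      φ = ψ ≫ Sigma.desc fun i : s => Sigma.ι Y i.1

/-- An object `Z` is endofinite if `Hom_T(X, Z)` has finite length over `End_T(Z)` for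
every compact `X`. -/
def IsEndofinite (Z : T) : Prop :=
  ∀ X : T, IsCompactObj X → IsFiniteLength (End Z) (X ⟶ Z)


namespace S19

open CompositionSeries

/-! ### Finite length machinery -/

section Flen

variable (R : Type*) [Ring R] (M : Type*) [AddCommGroup M] [Module R M]

open Classical in
/-- Length of a module, defined via a chosen composition series (0 if none exists). -/
noncomputable def flen : ℕ :=
  if h : ∃ s : CompositionSeries (Submodule R M), s.head = ⊥ ∧ s.last = ⊤ then
    h.choose.length else 0

variable {R M}

theorem flen_eq (s : CompositionSeries (Submodule R M)) (h1 : s.head = ⊥) (h2 : s.last = ⊤) :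
    flen R M = s.length := by
  have hex : ∃ t : CompositionSeries (Submodule R M), t.head = ⊥ ∧ t.last = ⊤ := ⟨s, h1, h2⟩
  rw [flen, dif_pos hex]
  exact CompositionSeries.Equivalent.length_eq
    (CompositionSeries.jordan_holder _ _ (by rw [hex.choose_spec.1, h1])
      (by rw [hex.choose_spec.2, h2]))

end Flen

section CovBy

variable {α : Type*} [PartialOrder α]

theorem covBy_of_Iic {c : α} {a b : {x : α // x ≤ c}} (h : a ⋖ b) : (a : α) ⋖ (b : α) := by
  refine ⟨Subtype.coe_lt_coe.mpr h.1, fun x hax hxb => ?_⟩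
  exact h.2 (c := ⟨x, le_trans hxb.le b.2⟩) (Subtype.mk_lt_mk.mpr hax) (Subtype.mk_lt_mk.mpr hxb)

theorem covBy_of_Ici {c : α} {a b : {x : α // c ≤ x}} (h : a ⋖ b) : (a : α) ⋖ (b : α) := by
  refine ⟨Subtype.coe_lt_coe.mpr h.1, fun x hax hxb => ?_⟩
  exact h.2 (c := ⟨x, le_trans a.2 hax.le⟩) (Subtype.mk_lt_mk.mpr hax) (Subtype.mk_lt_mk.mpr hxb)

end CovBy

section Additive

variable {R : Type*} [Ring R] {M : Type*} [AddCommGroup M] [Module R M]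

theorem covBy_map_subtype (K : Submodule R M) {p q : Submodule R K} (h : p ⋖ q) :
    p.map K.subtype ⋖ q.map K.subtype := by
  have h2 := (apply_covBy_apply_iff (Submodule.MapSubtype.orderIso K)).mpr h
  exact covBy_of_Iic h2

theorem covBy_comap_mkQ (K : Submodule R M) {p q : Submodule R (M ⧸ K)} (h : p ⋖ q) :
    p.comap K.mkQ ⋖ q.comap K.mkQ := by
  have h2 := (apply_covBy_apply_iff (Submodule.comapMkQRelIso K)).mpr h
  exact covBy_of_Ici h2

theorem flen_additive (h : IsFiniteLength R M) (K : Submodule R M) :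
    flen R M = flen R K + flen R (M ⧸ K) := by
  obtain ⟨hN, hA⟩ := isFiniteLength_iff_isNoetherian_isArtinian.mp h
  obtain ⟨sK, hK1, hK2⟩ := exists_compositionSeries_of_isNoetherian_isArtinian R K
  obtain ⟨sQ, hQ1, hQ2⟩ := exists_compositionSeries_of_isNoetherian_isArtinian R (M ⧸ K)
  let sK' : CompositionSeries (Submodule R M) :=
    sK.map ⟨fun p => p.map K.subtype, fun hpq => covBy_map_subtype K hpq⟩
  let sQ' : CompositionSeries (Submodule R M) :=
    sQ.map ⟨fun p => p.comap K.mkQ, fun hpq => covBy_comap_mkQ K hpq⟩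
  have hconn : sK'.last = sQ'.head := by
    simp only [sK', sQ', RelSeries.last_map, RelSeries.head_map, hK2, hQ1]
    show Submodule.map K.subtype ⊤ = Submodule.comap K.mkQ ⊥
    rw [Submodule.map_top, Submodule.range_subtype, Submodule.comap_bot, Submodule.ker_mkQ]
  have h1 : (sK'.smash sQ' hconn).head = ⊥ := by
    rw [RelSeries.head_smash]
    simp only [sK', RelSeries.head_map, hK1]
    show Submodule.map K.subtype ⊥ = ⊥
    exact Submodule.map_bot _
  have h2 : (sK'.smash sQ' hconn).last = ⊤ := by
    rw [RelSeries.last_smash]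
    simp only [sQ', RelSeries.last_map, hQ2]
    show Submodule.comap K.mkQ ⊤ = ⊤
    exact Submodule.comap_top _
  rw [flen_eq _ h1 h2, flen_eq sK hK1 hK2, flen_eq sQ hQ1 hQ2]
  show (sK'.smash sQ' hconn).length = sK.length + sQ.length
  simp [sK', sQ', RelSeries.smash]

theorem isFiniteLength_submodule (h : IsFiniteLength R M) (p : Submodule R M) :
    IsFiniteLength R p := by
  obtain ⟨hN, hA⟩ := isFiniteLength_iff_isNoetherian_isArtinian.mp h
  exact isFiniteLength_iff_isNoetherian_isArtinian.mpr ⟨inferInstance, inferInstance⟩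

end Additive

/-! ### Transport of composition series -/

section Transport

variable {R S M N : Type*} [Ring R] [Ring S] [AddCommGroup M] [Module R M]
  [AddCommGroup N] [Module S N]

/-- The order isomorphism of submodule lattices induced by an equivariant additive
equivalence. -/
def submoduleCongr (σ : R ≃+* S) (Φ : M ≃+ N)
    (hΦ : ∀ (r : R) (m : M), Φ (r • m) = σ r • Φ m) :
    Submodule R M ≃o Submodule S N where
  toFun p :=
    { carrier := Φ '' p
      add_mem' := by
        rintro _ _ ⟨a, ha, rfl⟩ ⟨b, hb, rfl⟩
        exact ⟨a + b, p.add_mem ha hb, map_add Φ a b⟩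
      zero_mem' := ⟨0, p.zero_mem, map_zero Φ⟩
      smul_mem' := by
        rintro c _ ⟨a, ha, rfl⟩
        exact ⟨σ.symm c • a, p.smul_mem _ ha, by rw [hΦ, σ.apply_symm_apply]⟩ }
  invFun q :=
    { carrier := Φ.symm '' q
      add_mem' := by
        rintro _ _ ⟨a, ha, rfl⟩ ⟨b, hb, rfl⟩
        exact ⟨a + b, q.add_mem ha hb, map_add Φ.symm a b⟩
      zero_mem' := ⟨0, q.zero_mem, map_zero Φ.symm⟩
      smul_mem' := by
        rintro c _ ⟨a, ha, rfl⟩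
        refine ⟨σ c • a, q.smul_mem _ ha, ?_⟩
        apply Φ.injective
        rw [Φ.apply_symm_apply, hΦ, Φ.apply_symm_apply] }
  left_inv p := by
    ext x
    simp only [Submodule.mem_mk, AddSubmonoid.mem_mk, AddSubsemigroup.mem_mk, Set.mem_image]
    constructor
    · rintro ⟨a, ⟨b, hb, rfl⟩, rfl⟩; simpa using hb
    · intro hx; exact ⟨Φ x, ⟨x, hx, rfl⟩, Φ.symm_apply_apply x⟩
  right_inv q := by
    ext x
    simp only [Submodule.mem_mk, AddSubmonoid.mem_mk, AddSubsemigroup.mem_mk, Set.mem_image]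
    constructor
    · rintro ⟨a, ⟨b, hb, rfl⟩, rfl⟩; simpa using hb
    · intro hx; exact ⟨Φ.symm x, ⟨x, hx, rfl⟩, Φ.apply_symm_apply x⟩
  map_rel_iff' {p q} := by
    constructor
    · intro hle x hx
      have : Φ x ∈ Φ '' q := hle ⟨x, hx, rfl⟩
      obtain ⟨y, hy, hyx⟩ := this
      rwa [← Φ.injective hyx]
    · intro hle x hx
      obtain ⟨a, ha, rfl⟩ := hx
      exact ⟨a, hle ha, rfl⟩

theorem flen_congr (σ : R ≃+* S) (Φ : M ≃+ N)
    (hΦ : ∀ (r : R) (m : M), Φ (r • m) = σ r • Φ m) : flen R M = flen S N := by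
  classical
  set g := submoduleCongr σ Φ hΦ with hg
  have hmap : ∀ s : CompositionSeries (Submodule R M), s.head = ⊥ → s.last = ⊤ →
      ∃ t : CompositionSeries (Submodule S N), t.head = ⊥ ∧ t.last = ⊤ ∧
        t.length = s.length := by
    intro s h1 h2
    refine ⟨s.map ⟨fun p => g p, fun hpq => (apply_covBy_apply_iff g).mpr hpq⟩, ?_, ?_, rfl⟩
    · show g s.head = ⊥
      rw [h1, OrderIso.map_bot]
    · show g s.last = ⊤
      rw [h2, OrderIso.map_top]
  have hmap' : ∀ t : CompositionSeries (Submodule S N), t.head = ⊥ → t.last = ⊤ →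
      ∃ s : CompositionSeries (Submodule R M), s.head = ⊥ ∧ s.last = ⊤ := by
    intro t h1 h2
    refine ⟨t.map ⟨fun p => g.symm p, fun hpq => (apply_covBy_apply_iff g.symm).mpr hpq⟩, ?_, ?_⟩
    · show g.symm t.head = ⊥
      rw [h1, OrderIso.map_bot]
    · show g.symm t.last = ⊤
      rw [h2, OrderIso.map_top]
  by_cases hex : ∃ s : CompositionSeries (Submodule R M), s.head = ⊥ ∧ s.last = ⊤
  · obtain ⟨s, h1, h2⟩ := hex
    obtain ⟨t, ht1, ht2, hlen⟩ := hmap s h1 h2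
    rw [flen_eq s h1 h2, flen_eq t ht1 ht2, hlen]
  · rw [flen, flen, dif_neg hex, dif_neg]
    rintro ⟨t, h1, h2⟩
    exact hex (hmap' t h1 h2)

theorem flen_congr_linearEquiv {M N : Type*} [AddCommGroup M] [Module R M] [AddCommGroup N]
    [Module R N] (e : M ≃ₗ[R] N) : flen R M = flen R N :=
  flen_congr (RingEquiv.refl R) e.toAddEquiv (fun r m => e.map_smul r m)

theorem flen_range_eq {M₁ M₂ N₁ N₂ : Type*} [AddCommGroup M₁] [Module R M₁]
    [AddCommGroup M₂] [Module R M₂] [AddCommGroup N₁] [Module S N₁] [AddCommGroup N₂]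
    [Module S N₂] (σ : R ≃+* S) (Φ₁ : M₁ ≃+ N₁) (Φ₂ : M₂ ≃+ N₂)
    (hΦ₂ : ∀ (r : R) (m : M₂), Φ₂ (r • m) = σ r • Φ₂ m)
    (u : M₁ →ₗ[R] M₂) (v : N₁ →ₗ[S] N₂) (hcomm : ∀ m, Φ₂ (u m) = v (Φ₁ m)) :
    flen R (LinearMap.range u) = flen S (LinearMap.range v) := by
  have hfwd : ∀ x : M₂, x ∈ LinearMap.range u → Φ₂ x ∈ LinearMap.range v := by
    rintro _ ⟨m, rfl⟩; exact ⟨Φ₁ m, (hcomm m).symm⟩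
  have hbwd : ∀ y : N₂, y ∈ LinearMap.range v → Φ₂.symm y ∈ LinearMap.range u := by
    rintro _ ⟨n, rfl⟩
    refine ⟨Φ₁.symm n, ?_⟩
    apply Φ₂.injective
    rw [Φ₂.apply_symm_apply, hcomm, Φ₁.apply_symm_apply]
  refine flen_congr σ
    { toFun := fun x => ⟨Φ₂ x.1, hfwd x.1 x.2⟩
      invFun := fun y => ⟨Φ₂.symm y.1, hbwd y.1 y.2⟩
      left_inv := fun x => Subtype.ext (Φ₂.symm_apply_apply x.1)
      right_inv := fun y => Subtype.ext (Φ₂.apply_symm_apply y.1)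
      map_add' := fun x y => Subtype.ext (map_add Φ₂ x.1 y.1) } ?_
  intro r m
  exact Subtype.ext (hΦ₂ r m.1)

theorem flen_eq_zero_of_subsingleton {M : Type*} [AddCommGroup M] [Module R M]
    (h : ∀ x : M, x = 0) : flen R M = 0 := by
  have hbt : (⊥ : Submodule R M) = ⊤ := by
    ext x; simp [h x]
  have := flen_eq (RelSeries.singleton _ (⊥ : Submodule R M)) rfl
    (by simp [RelSeries.singleton, hbt]; rfl)
  simpa [RelSeries.singleton] using this

theorem eq_zero_of_flen_eq_zero {M : Type*} [AddCommGroup M] [Module R M]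
    (h : IsFiniteLength R M) (h0 : flen R M = 0) : ∀ x : M, x = 0 := by
  obtain ⟨s, h1, h2⟩ := isFiniteLength_iff_exists_compositionSeries.mp h
  rw [flen_eq s h1 h2] at h0
  have hbt : (⊥ : Submodule R M) = ⊤ := by
    rw [← h1, ← h2]
    show s 0 = s (Fin.last s.length)
    congr 1
    ext
    simp [Fin.last, h0]
  intro x
  have : x ∈ (⊤ : Submodule R M) := trivial
  rw [← hbt] at this
  simpa using this

end Transport

/-! ### Hom functors into an object as modules over its endomorphism ring -/

section Cat

variable {T : Type u} [Category.{v} T] [Preadditive T]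

/-- Precomposition as a linear map over the endomorphism ring. -/
@[simps]
def precompHom {X Y : T} (Z : T) (f : X ⟶ Y) : (Y ⟶ Z) →ₗ[End Z] (X ⟶ Z) where
  toFun m := f ≫ m
  map_add' m n := by simp
  map_smul' r m := by simp [End.smul_right]

variable [HasZeroObject T] [HasShift T ℤ] [∀ n : ℤ, (shiftFunctor T n).Additive]
  [Pretriangulated T]

theorem ker_precomp_eq_range (Tr : Triangle T) (hT : Tr ∈ distTriang T) (Z : T) :
    LinearMap.ker (precompHom Z Tr.mor₁) = LinearMap.range (precompHom Z Tr.mor₂) := by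
  ext m
  simp only [LinearMap.mem_ker, LinearMap.mem_range, precompHom_apply]
  constructor
  · intro hm
    obtain ⟨g, hg⟩ := Triangle.yoneda_exact₂ _ hT m hm
    exact ⟨g, hg.symm⟩
  · rintro ⟨n, rfl⟩
    rw [← Category.assoc, comp_distTriang_mor_zero₁₂ _ hT, Limits.zero_comp]

theorem flen_hom_eq (Tr : Triangle T) (hT : Tr ∈ distTriang T) (Z : T)
    (hfl : IsFiniteLength (End Z) (Tr.obj₂ ⟶ Z)) :
    flen (End Z) (Tr.obj₂ ⟶ Z) =
      flen (End Z) (LinearMap.range (precompHom Z Tr.mor₂)) +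
        flen (End Z) (LinearMap.range (precompHom Z Tr.mor₁)) := by
  rw [flen_additive hfl (LinearMap.ker (precompHom Z Tr.mor₁)),
    flen_congr_linearEquiv (LinearMap.quotKerEquivRange (precompHom Z Tr.mor₁)),
    ker_precomp_eq_range Tr hT Z]

/-- The ring automorphism of `End Z` coming from an isomorphism `Z⟦1⟧ ≅ Z`. -/
@[simps]
noncomputable def sigmaRingEquiv (Z : T) (e : (shiftFunctor T (1 : ℤ)).obj Z ≅ Z) :
    End Z ≃+* End Z where
  toFun r := e.inv ≫ (shiftFunctor T (1 : ℤ)).map r ≫ e.hom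
  invFun r := (shiftFunctor T (1 : ℤ)).preimage (e.hom ≫ r ≫ e.inv)
  left_inv r := by
    apply (shiftFunctor T (1 : ℤ)).map_injective
    simp [Functor.map_preimage]
  right_inv r := by
    simp [Functor.map_preimage]
  map_mul' r s := by
    simp only [End.mul_def, Functor.map_comp, Category.assoc, Iso.hom_inv_id_assoc]
  map_add' r s := by
    show e.inv ≫ (shiftFunctor T (1 : ℤ)).map ((r : Z ⟶ Z) + (s : Z ⟶ Z)) ≫ e.hom = _
    rw [Functor.map_add]
    simp [Preadditive.comp_add, Preadditive.add_comp]

/-- The shift additive equivalence on Hom groups into a `Σ`-invariant object `Z`. -/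
@[simps]
noncomputable def shiftHomAddEquiv (Z W : T) (e : (shiftFunctor T (1 : ℤ)).obj Z ≅ Z) :
    (W ⟶ Z) ≃+ ((shiftFunctor T (1 : ℤ)).obj W ⟶ Z) where
  toFun m := (shiftFunctor T (1 : ℤ)).map m ≫ e.hom
  invFun n := (shiftFunctor T (1 : ℤ)).preimage (n ≫ e.inv)
  left_inv m := by
    apply (shiftFunctor T (1 : ℤ)).map_injective
    simp [Functor.map_preimage]
  right_inv n := by
    simp [Functor.map_preimage]
  map_add' m n := by
    simp [Functor.map_add, Preadditive.add_comp]

theorem shiftHomAddEquiv_smul (Z W : T) (e : (shiftFunctor T (1 : ℤ)).obj Z ≅ Z)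
    (r : End Z) (m : W ⟶ Z) :
    shiftHomAddEquiv Z W e (r • m) = sigmaRingEquiv Z e r • shiftHomAddEquiv Z W e m := by
  simp [End.smul_right, Functor.map_comp, Category.assoc]

theorem shiftHomAddEquiv_natural (Z : T) {X Y : T} (e : (shiftFunctor T (1 : ℤ)).obj Z ≅ Z)
    (f : X ⟶ Y) (m : Y ⟶ Z) :
    shiftHomAddEquiv Z X e (f ≫ m) =
      (shiftFunctor T (1 : ℤ)).map f ≫ shiftHomAddEquiv Z Y e m := by
  simp [Functor.map_comp, Category.assoc]

end Cat

end S19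


namespace S19

set_option linter.unusedSectionVars false in
theorem isCompactObj_shift {X : T} (hX : IsCompactObj X) :
    IsCompactObj ((shiftFunctor T (1 : ℤ)).obj X) := by
  intro ι Y φ
  let A := shiftFunctor T (1 : ℤ)
  let B := shiftFunctor T (-1 : ℤ)
  let w₁ : A ⋙ B ≅ 𝟭 T := shiftFunctorCompIsoId T (1 : ℤ) (-1 : ℤ) (by norm_num)
  let w₂ : B ⋙ A ≅ 𝟭 T := shiftFunctorCompIsoId T (-1 : ℤ) (1 : ℤ) (by norm_num)
  let c : (∐ fun i => B.obj (Y i)) ⟶ B.obj (∐ Y) := sigmaComparison B Y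
  haveI : IsIso c := by unfold c; infer_instance
  obtain ⟨s, ψ, hψ⟩ := hX ι (fun i => B.obj (Y i))
    (w₁.inv.app X ≫ B.map φ ≫ inv c)
  let descs : (∐ fun i : s => Y i) ⟶ ∐ Y := Sigma.desc fun i : s => Sigma.ι Y i.1
  let cs : (∐ fun i : s => B.obj (Y i.1)) ⟶ B.obj (∐ fun i : s => Y i.1) :=
    sigmaComparison B (fun i : s => Y i.1)
  have R1 : (Sigma.desc fun i : s => Sigma.ι (fun j => B.obj (Y j)) i.1) ≫ c
      = cs ≫ B.map descs := by
    ext i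
    simp [c, cs, descs, ι_comp_sigmaComparison, ← Functor.map_comp]
  have h3 : w₁.inv.app X ≫ B.map φ = ψ ≫ cs ≫ B.map descs := by
    have := congrArg (fun t => t ≫ c) hψ
    simpa [Category.assoc, IsIso.inv_hom_id, R1] using this
  have hBφ : B.map φ = w₁.hom.app X ≫ ψ ≫ cs ≫ B.map descs := by
    rw [← h3, ← Category.assoc, Iso.hom_inv_id_app, Category.id_comp]
  have hnat1 : A.map (B.map φ) ≫ w₂.hom.app (∐ Y) = w₂.hom.app (A.obj X) ≫ φ :=
    w₂.hom.naturality φ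
  have hnat2 : A.map (B.map descs) ≫ w₂.hom.app (∐ Y)
      = w₂.hom.app (∐ fun i : s => Y i) ≫ descs := w₂.hom.naturality descs
  refine ⟨s, w₂.inv.app (A.obj X) ≫ A.map (w₁.hom.app X ≫ ψ ≫ cs) ≫
    w₂.hom.app (∐ fun i : s => Y i), ?_⟩
  have key : φ = w₂.inv.app (A.obj X) ≫ A.map (B.map φ) ≫ w₂.hom.app (∐ Y) := by
    rw [hnat1, ← Category.assoc, Iso.inv_hom_id_app]
    exact (Category.id_comp φ).symm
  rw [key, hBφ]
  simp only [Functor.map_comp, Category.assoc]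
  rw [hnat2]

set_option linter.unusedSectionVars false in
theorem isCompactObj_cone (Tr : Triangle T) (hT : Tr ∈ distTriang T)
    (h1 : IsCompactObj Tr.obj₁) (h2 : IsCompactObj Tr.obj₂) : IsCompactObj Tr.obj₃ := by
  classical
  have h1s : IsCompactObj ((shiftFunctor T (1 : ℤ)).obj Tr.obj₁) := isCompactObj_shift h1
  intro ι Y φ
  obtain ⟨s, ψ, hψ⟩ := h2 ι Y (Tr.mor₂ ≫ φ)
  let p : (∐ Y) ⟶ ∐ fun i : {i // i ∉ s} => Y i.1 :=
    Sigma.desc fun i => if h : i ∈ s then 0 else Sigma.ι (fun j : {i // i ∉ s} => Y j.1) ⟨i, h⟩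
  let r : (∐ Y) ⟶ ∐ fun i : s => Y i.1 :=
    Sigma.desc fun i => if h : i ∈ s then Sigma.ι (fun j : s => Y j.1) ⟨i, h⟩ else 0
  let descs : (∐ fun i : s => Y i.1) ⟶ ∐ Y := Sigma.desc fun i : s => Sigma.ι Y i.1
  let descc : (∐ fun i : {i // i ∉ s} => Y i.1) ⟶ ∐ Y :=
    Sigma.desc fun i : {i // i ∉ s} => Sigma.ι Y i.1
  have hsp : descs ≫ p = 0 := by
    ext i
    simp [descs, p, dif_pos i.2]
  have hcp : descc ≫ p = 𝟙 _ := by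
    ext i
    simp [descc, p, dif_neg i.2]
  have hkey : r ≫ descs + p ≫ descc = 𝟙 (∐ Y) := by
    ext i
    by_cases h : i ∈ s
    · simp [r, p, descs, descc, dif_pos h, Preadditive.comp_add]
    · simp [r, p, descs, descc, dif_neg h, Preadditive.comp_add]
  have hp0 : Tr.mor₂ ≫ (φ ≫ p) = 0 := by
    rw [← Category.assoc, hψ, Category.assoc, hsp, Limits.comp_zero]
  obtain ⟨θ, hθ⟩ := Triangle.yoneda_exact₃ Tr hT (φ ≫ p) hp0
  obtain ⟨t, ξ, hξ⟩ := h1s _ _ θ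
  let desct : (∐ fun j : t => Y j.1.1) ⟶ ∐ fun i : {i // i ∉ s} => Y i.1 :=
    Sigma.desc fun j : t => Sigma.ι (fun i : {i // i ∉ s} => Y i.1) j.1
  have hξ' : θ = ξ ≫ desct := hξ
  let φ₂ : Tr.obj₃ ⟶ ∐ Y := φ - Tr.mor₃ ≫ θ ≫ descc
  have hφ₂p : φ₂ ≫ p = 0 := by
    have : (Tr.mor₃ ≫ θ ≫ descc) ≫ p = Tr.mor₃ ≫ θ := by
      simp only [Category.assoc, hcp, Category.comp_id]
    simp [φ₂, Preadditive.sub_comp, this, ← hθ]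
  have hφ₂ : φ₂ = (φ₂ ≫ r) ≫ descs := by
    conv_lhs => rw [← Category.comp_id φ₂, ← hkey]
    rw [Preadditive.comp_add, ← Category.assoc, ← Category.assoc, hφ₂p, Limits.zero_comp,
      add_zero]
  let s' : Finset ι := s ∪ t.image (fun j => j.1)
  have hmem1 : ∀ i : s, i.1 ∈ s' := fun i => Finset.mem_union_left _ i.2
  have hmem2 : ∀ j : t, j.1.1 ∈ s' := fun j =>
    Finset.mem_union_right _ (Finset.mem_image_of_mem _ j.2)
  let ψ' : Tr.obj₃ ⟶ ∐ fun i : s' => Y i.1 :=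
    (φ₂ ≫ r) ≫ Sigma.desc (fun i : s => Sigma.ι (fun k : s' => Y k.1) ⟨i.1, hmem1 i⟩) +
      (Tr.mor₃ ≫ ξ) ≫ Sigma.desc (fun j : t => Sigma.ι (fun k : s' => Y k.1) ⟨j.1.1, hmem2 j⟩)
  refine ⟨s', ψ', ?_⟩
  have e1 : Sigma.desc (fun i : s => Sigma.ι (fun k : s' => Y k.1) ⟨i.1, hmem1 i⟩) ≫
      (Sigma.desc fun i : s' => Sigma.ι Y i.1) = descs := by
    ext i
    simp [descs]
  have e2 : Sigma.desc (fun j : t => Sigma.ι (fun k : s' => Y k.1) ⟨j.1.1, hmem2 j⟩) ≫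
      (Sigma.desc fun i : s' => Sigma.ι Y i.1) = desct ≫ descc := by
    ext j
    simp [desct, descc]
  rw [show ψ' ≫ (Sigma.desc fun i : s' => Sigma.ι Y i.1) =
      (φ₂ ≫ r) ≫ descs + (Tr.mor₃ ≫ ξ) ≫ (desct ≫ descc) by
    simp only [ψ', Preadditive.add_comp, Category.assoc, e1, e2]]
  rw [← hφ₂]
  have : (Tr.mor₃ ≫ ξ) ≫ (desct ≫ descc) = Tr.mor₃ ≫ θ ≫ descc := by
    rw [hξ']; simp [Category.assoc]
  rw [this]
  simp [φ₂]

end S19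

theorem kernel_of_basic_rankFunction_eq_annihilator
    -- `T` is compactly generated:
    (hgen : ∀ Y : T, (∀ X : T, IsCompactObj X → ∀ g : X ⟶ Y, g = 0) → IsZero Y)
    (hsmall : EssentiallySmall.{v} (ObjectProperty.FullSubcategory fun X : T => IsCompactObj X))
    -- the associated object `Z_ρ`: basic, Σ-invariant and endofinite
    (Zρ : T)
    (hbasic : ∃ (I : Type v) (Zi : I → T), (∀ i, IsLocalRing (End (Zi i))) ∧
      (∀ i j, i ≠ j → IsEmpty (Zi i ≅ Zi j)) ∧ Nonempty (Zρ ≅ ∐ Zi))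
    (hshift : Nonempty ((shiftFunctor T (1 : ℤ)).obj Zρ ≅ Zρ))
    (hendo : IsEndofinite Zρ)
    -- `ρ` is a rank function on `C = T^c`:
    (ρ : ∀ ⦃X Y : T⦄, (X ⟶ Y) → ℝ)
    (hnonneg : ∀ ⦃X Y : T⦄, IsCompactObj X → IsCompactObj Y → ∀ f : X ⟶ Y, 0 ≤ ρ f)
    (hadd : ∀ ⦃X₁ Y₁ X₂ Y₂ : T⦄, IsCompactObj X₁ → IsCompactObj Y₁ → IsCompactObj X₂ →
      IsCompactObj Y₂ → ∀ (f : X₁ ⟶ Y₁) (g : X₂ ⟶ Y₂),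
        ρ (biprod.map f g) = ρ f + ρ g)
    (hnull : ∀ (Tr : Triangle T), (Tr ∈ distTriang T) → IsCompactObj Tr.obj₁ →
      IsCompactObj Tr.obj₂ → IsCompactObj Tr.obj₃ →
        ρ Tr.mor₁ + ρ Tr.mor₂ = ρ (𝟙 Tr.obj₂))
    (hshiftInv : ∀ ⦃X Y : T⦄, IsCompactObj X → IsCompactObj Y → ∀ f : X ⟶ Y,
      ρ ((shiftFunctor T (1 : ℤ)).map f) = ρ f)
    -- `ρ(1_X)` is the composition length of `Hom_T(X, Z_ρ)` over `End_T(Z_ρ)`: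
    (hval : ∀ X : T, IsCompactObj X →
      ∃ s : CompositionSeries (Submodule (End Zρ) (X ⟶ Zρ)),
        s.head = ⊥ ∧ s.last = ⊤ ∧ ρ (𝟙 X) = s.length) :
    ∀ ⦃X Y : T⦄, IsCompactObj X → IsCompactObj Y → ∀ f : X ⟶ Y,
      (ρ f = 0 ↔ ∀ g : Y ⟶ Zρ, f ≫ g = 0) := by
  classical
  intro X Y hX hY f
  obtain ⟨C0, g, h, hT⟩ := Pretriangulated.distinguished_cocone_triangle f
  have e : (shiftFunctor T (1 : ℤ)).obj Zρ ≅ Zρ := hshift.some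
  have hX1 : IsCompactObj ((shiftFunctor T (1 : ℤ)).obj X) := S19.isCompactObj_shift hX
  have hY1 : IsCompactObj ((shiftFunctor T (1 : ℤ)).obj Y) := S19.isCompactObj_shift hY
  have hC : IsCompactObj C0 := S19.isCompactObj_cone _ hT hX hY
  have hT2 : (Triangle.mk f g h).rotate ∈ distTriang T :=
    Pretriangulated.rot_of_distTriang _ hT
  have hT3 : Triangle.mk h ((shiftFunctor T (1 : ℤ)).map f) ((shiftFunctor T (1 : ℤ)).map g)
      ∈ distTriang T := by
    refine Pretriangulated.isomorphic_distinguished _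
      (Pretriangulated.rot_of_distTriang _ hT2) _ ?_
    exact Triangle.isoMk _ _ (Iso.refl _) (Iso.refl _)
      (show ((shiftFunctor T (1 : ℤ)).obj Y ≅ (shiftFunctor T (1 : ℤ)).obj Y) from
        Iso.mk (-𝟙 _) (-𝟙 _) (by simp) (by simp))
      (by show h ≫ 𝟙 ((shiftFunctor T (1 : ℤ)).obj X) = 𝟙 C0 ≫ h; simp)
      (by
        show (shiftFunctor T (1 : ℤ)).map f ≫ (-𝟙 ((shiftFunctor T (1 : ℤ)).obj Y)) =
          𝟙 ((shiftFunctor T (1 : ℤ)).obj X) ≫ (-(shiftFunctor T (1 : ℤ)).map f)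
        simp)
      (by
        show (shiftFunctor T (1 : ℤ)).map g ≫ (shiftFunctor T (1 : ℤ)).map (𝟙 C0) =
          (-𝟙 ((shiftFunctor T (1 : ℤ)).obj Y)) ≫ (-(shiftFunctor T (1 : ℤ)).map g)
        simp)
  -- rank function identities from the three rotated triangles
  have E1 : ρ f + ρ g = ρ (𝟙 Y) := hnull _ hT hX hY hC
  have E2 : ρ g + ρ h = ρ (𝟙 C0) := hnull _ hT2 hY hC hX1
  have E3 : ρ h + ρ ((shiftFunctor T (1 : ℤ)).map f)
      = ρ (𝟙 ((shiftFunctor T (1 : ℤ)).obj X)) := hnull _ hT3 hC hX1 hY1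
  have Eshift : ρ ((shiftFunctor T (1 : ℤ)).map f) = ρ f := hshiftInv hX hY f
  -- length identities
  have hfinY : IsFiniteLength (End Zρ) (Y ⟶ Zρ) := hendo Y hY
  have hfinC : IsFiniteLength (End Zρ) (C0 ⟶ Zρ) := hendo C0 hC
  have hfinX1 : IsFiniteLength (End Zρ) ((shiftFunctor T (1 : ℤ)).obj X ⟶ Zρ) :=
    hendo _ hX1
  have hfinX : IsFiniteLength (End Zρ) (X ⟶ Zρ) := hendo X hX
  have A1 : S19.flen (End Zρ) (Y ⟶ Zρ)
      = S19.flen (End Zρ) (LinearMap.range (S19.precompHom Zρ g))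
        + S19.flen (End Zρ) (LinearMap.range (S19.precompHom Zρ f)) :=
    S19.flen_hom_eq _ hT Zρ hfinY
  have A2 : S19.flen (End Zρ) (C0 ⟶ Zρ)
      = S19.flen (End Zρ) (LinearMap.range (S19.precompHom Zρ h))
        + S19.flen (End Zρ) (LinearMap.range (S19.precompHom Zρ g)) :=
    S19.flen_hom_eq _ hT2 Zρ hfinC
  have A3 : S19.flen (End Zρ) ((shiftFunctor T (1 : ℤ)).obj X ⟶ Zρ)
      = S19.flen (End Zρ)
          (LinearMap.range (S19.precompHom Zρ ((shiftFunctor T (1 : ℤ)).map f)))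
        + S19.flen (End Zρ) (LinearMap.range (S19.precompHom Zρ h)) :=
    S19.flen_hom_eq _ hT3 Zρ hfinX1
  have Ashift : S19.flen (End Zρ) (LinearMap.range (S19.precompHom Zρ f))
      = S19.flen (End Zρ)
          (LinearMap.range (S19.precompHom Zρ ((shiftFunctor T (1 : ℤ)).map f))) :=
    S19.flen_range_eq (S19.sigmaRingEquiv Zρ e) (S19.shiftHomAddEquiv Zρ Y e)
      (S19.shiftHomAddEquiv Zρ X e) (S19.shiftHomAddEquiv_smul Zρ X e)
      (S19.precompHom Zρ f) (S19.precompHom Zρ ((shiftFunctor T (1 : ℤ)).map f))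
      (fun m => S19.shiftHomAddEquiv_natural Zρ e f m)
  -- the value of ρ on identities is the length of the Hom module
  have val : ∀ (W : T), IsCompactObj W → ρ (𝟙 W) = (S19.flen (End Zρ) (W ⟶ Zρ) : ℝ) := by
    intro W hW
    obtain ⟨s, h1, h2, h3⟩ := hval W hW
    rw [h3, S19.flen_eq s h1 h2]
  rw [val Y hY] at E1
  rw [val C0 hC] at E2
  rw [val _ hX1] at E3
  -- deduce that ρ f is the length of the image of Hom(f, Zρ)
  have key : ρ f = (S19.flen (End Zρ) (LinearMap.range (S19.precompHom Zρ f)) : ℝ) := by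
    rw [A1] at E1
    rw [A2] at E2
    rw [A3] at E3
    rw [Eshift, ← Ashift] at E3
    push_cast at E1 E2 E3
    linarith
  constructor
  · intro h0 g0
    have hflen0 : S19.flen (End Zρ) (LinearMap.range (S19.precompHom Zρ f)) = 0 := by
      have := key.symm.trans h0
      exact_mod_cast this
    have hz := S19.eq_zero_of_flen_eq_zero
      (S19.isFiniteLength_submodule hfinX (LinearMap.range (S19.precompHom Zρ f))) hflen0
    have := hz ⟨f ≫ g0, ⟨g0, rfl⟩⟩
    simpa [Subtype.ext_iff] using this
  · intro hall
    have hz : ∀ x : (LinearMap.range (S19.precompHom Zρ f)), x = 0 := by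
      rintro ⟨x, m, rfl⟩
      exact Subtype.ext (hall m)
    rw [key, S19.flen_eq_zero_of_subsingleton hz]
    simp
end
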